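/- arXiv:2503.24318 — 3 statements merged into one kernel-verified Lean document; each statement's English description precedes it below -/
import Mathlib

section
/- Let t be a uniformly random subset of {1,…,N} of size m < N/2, and let q ∈ {0,1}^N be a fixed string. Then the probability that |w(q_t) − w(q_{−t})| > δ is at most 2·exp(−δ²mN/(N+2)). -/
lemma hoeff_scalar (p : ℝ) (hp0 : 0 ≤ p) (hp1 : p ≤ 1) (y : ℝ) :
    p * Real.exp y + (1 - p) ≤ Real.exp (p * y + y ^ 2 / 8) := by
  rcases eq_or_lt_of_le hp1 with h1 | h1
  · subst h1; simpa using Real.exp_le_exp.2 (by nlinarith [sq_nonneg y] : y ≤ 1 * y + y ^ 2 / 8)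
  set D : ℝ → ℝ := fun y => 1 - p + p * Real.exp y with hD
  have hDpos : ∀ y, 0 < D y := by
    intro y
    have := Real.exp_pos y
    simp only [hD]
    nlinarith
  set G : ℝ → ℝ := fun y => p + y / 4 - p * Real.exp y / D y with hG
  have hDdiff : ∀ y, HasDerivAt D (p * Real.exp y) y := by
    intro y
    exact ((Real.hasDerivAt_exp y).const_mul p).const_add (1 - p)
  have hGderiv : ∀ y, HasDerivAt G
      ((p * Real.exp y / D y - 1 / 2) ^ 2) y := by
    intro y
    have h1 : HasDerivAt (fun y => p * Real.exp y / D y)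
        ((p * Real.exp y * D y - p * Real.exp y * (p * Real.exp y)) / (D y) ^ 2) y :=
      ((Real.hasDerivAt_exp y).const_mul p).div (hDdiff y) (ne_of_gt (hDpos y))
    have h2 : HasDerivAt (fun x => p + id x / 4 - p * Real.exp x / D x) (1 / 4 -
        ((p * Real.exp y * D y - p * Real.exp y * (p * Real.exp y)) / (D y) ^ 2)) y :=
      (((hasDerivAt_id y).div_const 4).const_add p).sub h1
    have h3 : (1 : ℝ) / 4 -
        ((p * Real.exp y * D y - p * Real.exp y * (p * Real.exp y)) / (D y) ^ 2)
        = (p * Real.exp y / D y - 1 / 2) ^ 2 := by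
      have hD0 : D y ≠ 0 := ne_of_gt (hDpos y)
      field_simp
      ring
    rw [h3] at h2
    exact h2
  have hGmono : Monotone G := by
    apply monotone_of_deriv_nonneg
    · exact fun y => (hGderiv y).differentiableAt
    · intro y
      rw [(hGderiv y).deriv]
      positivity
  have hG0 : G 0 = 0 := by
    simp only [hG, hD]
    norm_num
  set g : ℝ → ℝ := fun y => p * y + y ^ 2 / 8 - Real.log (D y) with hg
  have hgderiv : ∀ y, HasDerivAt g (G y) y := by
    intro y
    have h1 : HasDerivAt (fun y => Real.log (D y)) (p * Real.exp y / D y) y :=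
      (hDdiff y).log (ne_of_gt (hDpos y))
    have h2 : HasDerivAt (fun x : ℝ => p * x + x ^ 2 / 8) (p + y / 4) y := by
      have := ((hasDerivAt_id y).const_mul p).add ((hasDerivAt_pow 2 y).div_const 8)
      exact this.congr_deriv (by norm_num <;> ring)
    exact h2.sub h1
  have hg0 : g 0 = 0 := by
    simp only [hg, hD]
    norm_num
  have hgcont : Continuous g := by
    have : Continuous D := by
      simp only [hD]; continuity
    simp only [hg]
    exact ((continuous_const.mul continuous_id).add
      ((continuous_pow 2).div_const 8)).sub
      (this.log (fun x => ne_of_gt (hDpos x)))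
  have hgnonneg : 0 ≤ g y := by
    rcases le_total 0 y with hy | hy
    · have hmono : MonotoneOn g (Set.Ici 0) := by
        apply monotoneOn_of_deriv_nonneg (convex_Ici 0) hgcont.continuousOn
          (fun x _ => ((hgderiv x).differentiableAt).differentiableWithinAt)
        intro x hx
        rw [(hgderiv x).deriv]
        rw [interior_Ici, Set.mem_Ioi] at hx
        have := hGmono (le_of_lt hx)
        rw [hG0] at this
        exact this
      have := hmono Set.self_mem_Ici (Set.mem_Ici.2 hy) hy
      rwa [hg0] at this
    · have hanti : AntitoneOn g (Set.Iic 0) := by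
        apply antitoneOn_of_deriv_nonpos (convex_Iic 0) hgcont.continuousOn
          (fun x _ => ((hgderiv x).differentiableAt).differentiableWithinAt)
        intro x hx
        rw [(hgderiv x).deriv]
        rw [interior_Iic, Set.mem_Iio] at hx
        have := hGmono (le_of_lt hx)
        rw [hG0] at this
        exact this
      have := hanti (Set.mem_Iic.2 hy) Set.self_mem_Iic hy
      rwa [hg0] at this
  have hlog : Real.log (D y) ≤ p * y + y ^ 2 / 8 := by
    simp only [hg] at hgnonneg
    linarith
  calc p * Real.exp y + (1 - p) = D y := by simp only [hD]; ring
    _ = Real.exp (Real.log (D y)) := (Real.exp_log (hDpos y)).symm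
    _ ≤ Real.exp (p * y + y ^ 2 / 8) := Real.exp_le_exp.2 hlog

noncomputable def cBF (d m : ℕ) : ℝ :=
  ((d : ℝ) ^ 2 / 8) * ∑ i ∈ Finset.range m, (1 / ((d : ℝ) + i) ^ 2)

lemma cBF_succ (d m : ℕ) :
    cBF d (m + 1) = cBF d m + ((d : ℝ) ^ 2 / 8) * (1 / ((d : ℝ) + m) ^ 2) := by
  unfold cBF
  rw [Finset.sum_range_succ, mul_add]

open Finset

lemma key_count {α : Type*} [DecidableEq α] (U : Finset α) (m : ℕ) (f : Finset α → ℝ) :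
    ∑ x ∈ U, ∑ t ∈ (U.erase x).powersetCard m, f (insert x t)
      = (m + 1 : ℝ) * ∑ t ∈ U.powersetCard (m + 1), f t := by
  have step1 : ∀ x ∈ U, ∑ t ∈ (U.erase x).powersetCard m, f (insert x t)
      = ∑ t ∈ (U.powersetCard (m + 1)).filter (fun t => x ∈ t), f t := by
    intro x hx
    apply Finset.sum_nbij' (i := fun t => insert x t) (j := fun t => t.erase x)
    · intro t ht
      rw [Finset.mem_powersetCard] at ht
      obtain ⟨hsub, hcard⟩ := ht
      have hxt : x ∉ t := fun h => (Finset.mem_erase.1 (hsub h)).1 rfl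
      rw [Finset.mem_filter, Finset.mem_powersetCard]
      refine ⟨⟨?_, ?_⟩, Finset.mem_insert_self x t⟩
      · exact Finset.insert_subset hx (hsub.trans (Finset.erase_subset x U))
      · rw [Finset.card_insert_of_notMem hxt, hcard]
    · intro t ht
      rw [Finset.mem_filter, Finset.mem_powersetCard] at ht
      obtain ⟨⟨hsub, hcard⟩, hxt⟩ := ht
      rw [Finset.mem_powersetCard]
      refine ⟨Finset.erase_subset_erase x hsub, ?_⟩
      rw [Finset.card_erase_of_mem hxt, hcard]; rfl
    · intro t ht
      rw [Finset.mem_powersetCard] at ht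
      have hxt : x ∉ t := fun h => (Finset.mem_erase.1 (ht.1 h)).1 rfl
      exact Finset.erase_insert hxt
    · intro t ht
      rw [Finset.mem_filter] at ht
      exact Finset.insert_erase ht.2
    · intro t ht; rfl
  rw [Finset.sum_congr rfl step1]
  have step2 : ∑ x ∈ U, ∑ t ∈ (U.powersetCard (m + 1)).filter (fun t => x ∈ t), f t
      = ∑ t ∈ U.powersetCard (m + 1), ∑ x ∈ U, if x ∈ t then f t else 0 := by
    rw [Finset.sum_comm]
    apply Finset.sum_congr rfl
    intro t _
    rw [Finset.sum_filter]
  rw [step2]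
  rw [Finset.mul_sum]
  apply Finset.sum_congr rfl
  intro t ht
  rw [Finset.mem_powersetCard] at ht
  rw [Finset.sum_ite_mem]
  rw [Finset.inter_eq_right.2 ht.1, Finset.sum_const, ht.2]
  push_cast
  ring

lemma step_arith (N m k : ℕ) (s : ℝ) (hmN : m + 1 < N) (hkN : k ≤ N) :
    (k:ℝ) * (Real.exp s * Real.exp (s * m * ((k-1:ℕ):ℝ) / ((N-1:ℕ):ℝ) + s^2 * cBF (N-(m+1)) m))
      + ((N-k:ℕ):ℝ) * Real.exp (s * m * (k:ℝ) / ((N-1:ℕ):ℝ) + s^2 * cBF (N-(m+1)) m)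
    ≤ (N:ℝ) * Real.exp (s * (m+1) * (k:ℝ) / (N:ℝ) + s^2 * cBF (N-(m+1)) (m+1)) := by
  have h1N : 1 ≤ N := by omega
  have hn1R : ((N-1:ℕ):ℝ) = (N:ℝ) - 1 := by rw [Nat.cast_sub h1N]; norm_num
  have hdR : ((N-(m+1):ℕ):ℝ) = (N:ℝ) - m - 1 := by
    rw [Nat.cast_sub (by omega)]; push_cast; ring
  have hNkR : ((N-k:ℕ):ℝ) = (N:ℝ) - k := by rw [Nat.cast_sub hkN]
  have hN0 : (0:ℝ) < (N:ℝ) := by exact_mod_cast (by omega : 0 < N)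
  have hn1pos : (0:ℝ) < (N:ℝ) - 1 := by
    have : (2:ℝ) ≤ (N:ℝ) := by exact_mod_cast (by omega : 2 ≤ N)
    linarith
  have hcsucc : cBF (N-(m+1)) (m+1)
      = cBF (N-(m+1)) m + (((N:ℝ)-m-1)^2/8) * (1/((N:ℝ)-1)^2) := by
    rw [cBF_succ, hdR]
    congr 2
    ring
  rcases Nat.eq_zero_or_pos k with rfl | hk1
  · simp only [Nat.cast_zero, mul_zero, zero_mul, zero_div, zero_add, Nat.sub_zero]
    apply mul_le_mul_of_nonneg_left _ hN0.le
    apply Real.exp_le_exp.2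
    rw [hcsucc]
    have : 0 ≤ s^2 * ((((N:ℝ)-m-1)^2/8) * (1/((N:ℝ)-1)^2)) := by positivity
    nlinarith [this]
  · have hk1R : ((k-1:ℕ):ℝ) = (k:ℝ) - 1 := by rw [Nat.cast_sub hk1]; norm_num
    set c := cBF (N-(m+1)) m with hc
    set y := s * (((N:ℝ)-m-1)/((N:ℝ)-1)) with hy
    set E := s * m * (k:ℝ) / ((N:ℝ)-1) + s^2 * c with hE
    have H := hoeff_scalar ((k:ℝ)/N) (by positivity)
      (by rw [div_le_one hN0]; exact_mod_cast hkN) y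
    have H2 := mul_le_mul_of_nonneg_left H
      (le_of_lt (by positivity : (0:ℝ) < (N:ℝ) * Real.exp E))
    have ha : Real.exp s * Real.exp (s * m * ((k:ℝ)-1) / ((N:ℝ)-1) + s^2*c)
        = Real.exp y * Real.exp E := by
      rw [← Real.exp_add, ← Real.exp_add, hy, hE]
      congr 1
      field_simp
      ring
    have hb : Real.exp E * Real.exp ((k:ℝ)/N * y + y^2/8)
        = Real.exp (s*(m+1)*(k:ℝ)/(N:ℝ) + s^2*cBF (N-(m+1)) (m+1)) := by
      rw [← Real.exp_add, hcsucc, hE, hy]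
      congr 1
      field_simp
      ring
    calc (k:ℝ) * (Real.exp s * Real.exp (s * m * ((k-1:ℕ):ℝ) / ((N-1:ℕ):ℝ) + s^2 * c))
          + ((N-k:ℕ):ℝ) * Real.exp (s * m * (k:ℝ) / ((N-1:ℕ):ℝ) + s^2 * c)
        = (N:ℝ) * Real.exp E * ((k:ℝ)/N * Real.exp y + (1 - (k:ℝ)/N)) := by
          rw [hn1R, hk1R, hNkR, ha, ← hE]
          field_simp
      _ ≤ (N:ℝ) * Real.exp E * Real.exp ((k:ℝ)/N * y + y^2/8) := H2
      _ = (N:ℝ) * Real.exp (s*(m+1)*(k:ℝ)/(N:ℝ) + s^2*cBF (N-(m+1)) (m+1)) := by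
          rw [mul_assoc, hb]

lemma cBF_zero (d : ℕ) : cBF d 0 = 0 := by simp [cBF]
lemma cBF_zero_d (m : ℕ) : cBF 0 m = 0 := by simp [cBF]



lemma mgf_aux {α : Type*} [DecidableEq α] (s : ℝ) :
    ∀ (m : ℕ) (U A : Finset α), A ⊆ U → m ≤ U.card →
    ∑ t ∈ U.powersetCard m, Real.exp (s * ((t ∩ A).card : ℝ)) ≤
      (U.card.choose m : ℝ) *
        Real.exp (s * m * (A.card : ℝ) / (U.card : ℝ) + s ^ 2 * cBF (U.card - m) m) := by
  intro m
  induction m with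
  | zero =>
    intro U A hA hm
    simp [Finset.powersetCard_zero, cBF_zero]
  | succ m ih =>
    intro U A hA hm
    rcases eq_or_lt_of_le hm with hEq | hLt
    · -- m + 1 = U.card : the only subset is U itself
      have hU : U.powersetCard (m+1) = {U} := by rw [hEq, Finset.powersetCard_self]
      rw [hU, Finset.sum_singleton, Finset.inter_eq_right.2 hA]
      rw [← hEq, Nat.sub_self, cBF_zero_d, Nat.choose_self]
      rw [mul_zero, add_zero, Nat.cast_one, one_mul]
      apply le_of_eq
      congr 1
      have hpos : ((m:ℝ) + 1) ≠ 0 := by positivity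
      push_cast
      field_simp
    · -- m + 1 < U.card
      set N := U.card with hN
      set k := A.card with hk
      have h1N : 1 ≤ N := by omega
      have hkN : k ≤ N := Finset.card_le_card hA
      have hn1m : N - 1 - m = N - (m+1) := by omega
      -- the per-element bound coming from the induction hypothesis
      have hperx : ∀ x ∈ U,
          ∑ t ∈ (U.erase x).powersetCard m, Real.exp (s * (((insert x t) ∩ A).card : ℝ))
          ≤ Real.exp (if x ∈ A then s else 0) *
            (((N-1).choose m : ℝ) *
              Real.exp (s * m * ((A.erase x).card : ℝ) / ((N-1:ℕ) : ℝ) + s ^ 2 * cBF (N-(m+1)) m)) := by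
        intro x hx
        have hcardU : (U.erase x).card = N - 1 := by rw [Finset.card_erase_of_mem hx]
        have hAx : A.erase x ⊆ U.erase x := Finset.erase_subset_erase x hA
        have hrw : ∀ t ∈ (U.erase x).powersetCard m,
            Real.exp (s * (((insert x t) ∩ A).card : ℝ))
            = Real.exp (if x ∈ A then s else 0) * Real.exp (s * ((t ∩ A.erase x).card : ℝ)) := by
          intro t ht
          rw [Finset.mem_powersetCard] at ht
          have hxt : x ∉ t := fun h => (Finset.mem_erase.1 (ht.1 h)).1 rfl
          have hinterase : t ∩ A.erase x = t ∩ A := by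
            ext y
            simp only [Finset.mem_inter, Finset.mem_erase]
            constructor
            · rintro ⟨hyt, _, hyA⟩; exact ⟨hyt, hyA⟩
            · rintro ⟨hyt, hyA⟩
              exact ⟨hyt, fun h => hxt (h ▸ hyt), hyA⟩
          by_cases hxA : x ∈ A
          · rw [if_pos hxA, Finset.insert_inter_of_mem hxA]
            have hnot : x ∉ t ∩ A := fun h => hxt (Finset.mem_inter.1 h).1
            rw [Finset.card_insert_of_notMem hnot, hinterase]
            rw [← Real.exp_add]
            congr 1
            push_cast
            ring
          · rw [if_neg hxA, Finset.insert_inter_of_notMem hxA, hinterase,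
              Real.exp_zero, one_mul]
        rw [Finset.sum_congr rfl hrw, ← Finset.mul_sum]
        apply mul_le_mul_of_nonneg_left _ (Real.exp_pos _).le
        have hihx := ih (U.erase x) (A.erase x) hAx (by rw [hcardU]; omega)
        rw [hcardU, hn1m] at hihx
        exact hihx
      -- sum the per-element bounds and split over A and U \ A
      have hsum : ∑ x ∈ U, (Real.exp (if x ∈ A then s else 0) *
            (((N-1).choose m : ℝ) *
              Real.exp (s * m * ((A.erase x).card : ℝ) / ((N-1:ℕ) : ℝ) + s ^ 2 * cBF (N-(m+1)) m)))
          = ((N-k:ℕ):ℝ) * (((N-1).choose m : ℝ) *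
              Real.exp (s * m * (k : ℝ) / ((N-1:ℕ) : ℝ) + s ^ 2 * cBF (N-(m+1)) m))
            + (k:ℝ) * (Real.exp s * (((N-1).choose m : ℝ) *
              Real.exp (s * m * ((k-1:ℕ) : ℝ) / ((N-1:ℕ) : ℝ) + s ^ 2 * cBF (N-(m+1)) m))) := by
        rw [← Finset.sum_sdiff hA]
        congr 1
        · rw [Finset.sum_congr rfl (fun x hx => ?_), Finset.sum_const,
            Finset.card_sdiff_of_subset hA, nsmul_eq_mul]
          have hxA : x ∉ A := (Finset.mem_sdiff.1 hx).2
          rw [if_neg hxA, Real.exp_zero, one_mul, Finset.erase_eq_of_notMem hxA]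
        · rw [Finset.sum_congr rfl (fun x hx => ?_), Finset.sum_const, nsmul_eq_mul]
          rw [if_pos hx, Finset.card_erase_of_mem hx]
      -- put everything together
      have hcount := key_count U m (fun t => Real.exp (s * ((t ∩ A).card : ℝ)))
      have hchain : (m + 1 : ℝ) * ∑ t ∈ U.powersetCard (m+1), Real.exp (s * ((t ∩ A).card : ℝ))
          ≤ ((N-1).choose m : ℝ) *
            ((N:ℝ) * Real.exp (s * (m+1) * (k:ℝ) / (N:ℝ) + s^2 * cBF (N-(m+1)) (m+1))) := by
        rw [← hcount]
        calc ∑ x ∈ U, ∑ t ∈ (U.erase x).powersetCard m,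
              Real.exp (s * (((insert x t) ∩ A).card : ℝ))
            ≤ ∑ x ∈ U, (Real.exp (if x ∈ A then s else 0) *
                (((N-1).choose m : ℝ) *
                  Real.exp (s * m * ((A.erase x).card : ℝ) / ((N-1:ℕ) : ℝ) + s ^ 2 * cBF (N-(m+1)) m))) :=
              Finset.sum_le_sum hperx
          _ = _ := hsum
          _ ≤ _ := by
              have := step_arith N m k s hLt hkN
              have hC : (0:ℝ) ≤ ((N-1).choose m : ℝ) := by positivity
              nlinarith [this, hC, mul_le_mul_of_nonneg_left this hC]
      have hNC : (N:ℝ) * ((N-1).choose m : ℝ) = ((m+1:ℕ):ℝ) * (N.choose (m+1) : ℝ) := by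
        have h := Nat.add_one_mul_choose_eq (N-1) m
        rw [Nat.sub_add_cancel h1N] at h
        exact_mod_cast congrArg (fun n : ℕ => (n:ℝ)) (h.trans (mul_comm _ _))
      have hfin : (m + 1 : ℝ) * ∑ t ∈ U.powersetCard (m+1), Real.exp (s * ((t ∩ A).card : ℝ))
          ≤ (m + 1 : ℝ) * ((N.choose (m+1) : ℝ) *
              Real.exp (s * (m+1) * (k:ℝ) / (N:ℝ) + s^2 * cBF (N-(m+1)) (m+1))) := by
        refine hchain.trans (le_of_eq ?_)
        push_cast at hNC
        linear_combination Real.exp (s * ((m:ℝ) + 1) * (k:ℝ) / (N:ℝ) + s ^ 2 * cBF (N - (m + 1)) (m + 1)) * hNC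
      have hm1 : (0:ℝ) < (m + 1 : ℝ) := by positivity
      have := le_of_mul_le_mul_left hfin hm1
      exact_mod_cast this

lemma cBF_pos (d m : ℕ) (hd : 1 ≤ d) (hm : 1 ≤ m) : 0 < cBF d m := by
  unfold cBF
  apply mul_pos (by positivity)
  apply Finset.sum_pos
  · intro i _
    have : (0:ℝ) < (d:ℝ) + i := by
      have : (1:ℝ) ≤ (d:ℝ) := by exact_mod_cast hd
      positivity
    positivity
  · exact Finset.nonempty_range_iff.2 (by omega)

lemma cBF_le_closed (d m : ℕ) (hd : 1 ≤ d) :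
    cBF d m ≤ ((d:ℝ)^2/8) * ((m:ℝ) / (((d:ℝ) - 1/2) * (((d:ℝ) + m) - 1/2))) := by
  have hdR : (1:ℝ) ≤ (d:ℝ) := by exact_mod_cast hd
  have h1 : ∑ i ∈ Finset.range m, (1 / ((d : ℝ) + i) ^ 2)
      ≤ ∑ i ∈ Finset.range m,
        (1 / ((d:ℝ) + i - 1/2) - 1 / ((d:ℝ) + (i+1) - 1/2)) := by
    apply Finset.sum_le_sum
    intro i _
    have hx : (1:ℝ) ≤ (d:ℝ) + i := by
      have : (0:ℝ) ≤ (i:ℝ) := Nat.cast_nonneg i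
      linarith
    have h2 : 1 / ((d:ℝ) + i - 1/2) - 1 / ((d:ℝ) + (i+1) - 1/2)
        = 1 / (((d:ℝ) + i)^2 - 1/4) := by
      have ha : (0:ℝ) < (d:ℝ) + i - 1/2 := by linarith
      have hb : (0:ℝ) < (d:ℝ) + (i+1) - 1/2 := by linarith
      rw [div_sub_div _ _ ha.ne' hb.ne']
      congr 1 <;> ring
    rw [h2]
    apply one_div_le_one_div_of_le
    · nlinarith
    · nlinarith
  have h3 : ∑ i ∈ Finset.range m,
        (1 / ((d:ℝ) + i - 1/2) - 1 / ((d:ℝ) + (i+1) - 1/2))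
      = 1 / ((d:ℝ) - 1/2) - 1 / ((d:ℝ) + m - 1/2) := by
    have := Finset.sum_range_sub' (fun i : ℕ => 1 / ((d:ℝ) + i - 1/2)) m
    simpa using this
  have h4 : 1 / ((d:ℝ) - 1/2) - 1 / ((d:ℝ) + m - 1/2)
      = (m:ℝ) / (((d:ℝ) - 1/2) * (((d:ℝ) + m) - 1/2)) := by
    have ha : (0:ℝ) < (d:ℝ) - 1/2 := by linarith
    have hb : (0:ℝ) < (d:ℝ) + m - 1/2 := by
      have : (0:ℝ) ≤ (m:ℝ) := Nat.cast_nonneg m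
      linarith
    rw [div_sub_div _ _ ha.ne' hb.ne']
    congr 1 <;> ring
  unfold cBF
  apply mul_le_mul_of_nonneg_left _ (by positivity)
  rw [← h4, ← h3]
  exact h1

lemma chernoff {α : Type*} [DecidableEq α] (U A : Finset α) (hA : A ⊆ U) (m : ℕ)
    (hm : m ≤ U.card) (a : ℝ) (ha : 0 ≤ a) (hc : 0 < cBF (U.card - m) m) :
    (((U.powersetCard m).filter
        (fun t => (m:ℝ) * (A.card:ℝ) / (U.card:ℝ) + a ≤ ((t ∩ A).card : ℝ))).card : ℝ)
      ≤ (U.card.choose m : ℝ) * Real.exp (-(a^2) / (4 * cBF (U.card - m) m)) := by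
  set c := cBF (U.card - m) m with hcdef
  set s := a / (2*c) with hs
  have hs0 : 0 ≤ s := by positivity
  set θ := (m:ℝ) * (A.card:ℝ) / (U.card:ℝ) + a with hθ
  set F := (U.powersetCard m).filter (fun t => θ ≤ ((t ∩ A).card : ℝ)) with hF
  have h1 : (F.card : ℝ) * Real.exp (s*θ) ≤ ∑ t ∈ F, Real.exp (s * ((t ∩ A).card:ℝ)) := by
    have hcst : ∑ _t ∈ F, Real.exp (s*θ) = (F.card : ℝ) * Real.exp (s*θ) := by
      rw [Finset.sum_const, nsmul_eq_mul]
    rw [← hcst]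
    apply Finset.sum_le_sum
    intro t ht
    apply Real.exp_le_exp.2
    exact mul_le_mul_of_nonneg_left (Finset.mem_filter.1 ht).2 hs0
  have h2 : ∑ t ∈ F, Real.exp (s * ((t ∩ A).card:ℝ))
      ≤ ∑ t ∈ U.powersetCard m, Real.exp (s * ((t ∩ A).card:ℝ)) :=
    Finset.sum_le_sum_of_subset_of_nonneg (Finset.filter_subset _ _)
      (fun _ _ _ => (Real.exp_pos _).le)
  have h4 : (F.card : ℝ) * Real.exp (s*θ)
      ≤ (U.card.choose m : ℝ) * Real.exp (s * m * (A.card:ℝ)/(U.card:ℝ) + s^2*c) :=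
    le_trans h1 (le_trans h2 (mgf_aux s m U A hA hm))
  have hepos := Real.exp_pos (s*θ)
  have h5 : (F.card : ℝ)
      ≤ (U.card.choose m : ℝ) * Real.exp (s * m * (A.card:ℝ)/(U.card:ℝ) + s^2*c - s*θ) := by
    rw [Real.exp_sub, ← mul_div_assoc, le_div_iff₀ hepos]
    exact h4
  have hc0 : c ≠ 0 := ne_of_gt hc
  have h6 : s * m * (A.card:ℝ)/(U.card:ℝ) + s^2*c - s*θ = -(a^2)/(4*c) := by
    have e1 : s * m * (A.card:ℝ)/(U.card:ℝ) + s^2*c - s*θ = s^2*c - s*a := by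
      rw [hθ]; ring
    rw [e1, hs]
    field_simp
    ring
  rw [h6] at h5
  exact h5

/-- Relative Hamming weight of the substring of `q` indexed by the finset `t`. -/
noncomputable def relWtOn {N : ℕ} (q : Fin N → Bool) (t : Finset (Fin N)) : ℝ :=
  ((t.filter fun i => q i = true).card : ℝ) / t.card

lemma real_split (x mm dd nn kk δ : ℝ) (hm : 0 < mm) (hd : 0 < dd) (hn : nn = mm + dd)
    (h : δ < |x/mm - (kk - x)/dd|) :
    mm*kk/nn + δ*mm*dd/nn ≤ x ∨ mm*(nn-kk)/nn + δ*mm*dd/nn ≤ mm - x := by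
  have hn0 : (0:ℝ) < nn := by linarith
  rcases lt_abs.1 h with h1 | h1
  · left
    have h3 := mul_lt_mul_of_pos_right h1 (mul_pos hm hd)
    have h4 : (x/mm - (kk-x)/dd) * (mm*dd) = x*nn - mm*kk := by
      rw [hn]; field_simp; ring
    rw [h4] at h3
    rw [← add_div, div_le_iff₀ hn0]
    nlinarith
  · right
    have h3 := mul_lt_mul_of_pos_right h1 (mul_pos hm hd)
    have h4 : (-(x/mm - (kk-x)/dd)) * (mm*dd) = mm*kk - x*nn := by
      rw [hn]; field_simp; ring
    rw [h4] at h3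
    rw [← add_div, div_le_iff₀ hn0]
    nlinarith

lemma final_numeric (N m : ℕ) (δ : ℝ) (hδ : 0 ≤ δ) (hm : 0 < m) (hmN : 2*m < N) :
    δ^2 * m * N / (N+2) ≤ (δ * m * ((N-m:ℕ):ℝ) / N)^2 / (4 * cBF (N-m) m) := by
  have hmn : m ≤ N := by omega
  have hd1 : 1 ≤ N - m := by omega
  have hddR : ((N-m:ℕ):ℝ) = (N:ℝ) - m := by rw [Nat.cast_sub hmn]
  have hN3 : (3:ℝ) ≤ (N:ℝ) := by exact_mod_cast (by omega : 3 ≤ N)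
  have hm1 : (1:ℝ) ≤ (m:ℝ) := by exact_mod_cast hm
  have h2d : (N:ℝ) + 1 ≤ 2*((N:ℝ) - m) := by
    have : 2*m + 1 ≤ N := by omega
    have := (by exact_mod_cast this : 2*(m:ℝ) + 1 ≤ (N:ℝ))
    linarith
  have hu : (0:ℝ) < ((N:ℝ) - m) - 1/2 := by linarith
  have hv : (0:ℝ) < (N:ℝ) - 1/2 := by linarith
  have hNpos : (0:ℝ) < (N:ℝ) := by linarith
  have hc : 0 < cBF (N-m) m := cBF_pos _ _ hd1 hm
  have hB : cBF (N-m) m ≤ (((N:ℝ)-m)^2/8) * ((m:ℝ) / ((((N:ℝ)-m) - 1/2) * ((N:ℝ) - 1/2))) := by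
    have := cBF_le_closed (N-m) m hd1
    rw [hddR] at this
    have he : ((N:ℝ) - m + m) - 1/2 = (N:ℝ) - 1/2 := by ring
    rw [he] at this
    exact this
  set B := (((N:ℝ)-m)^2/8) * ((m:ℝ) / ((((N:ℝ)-m) - 1/2) * ((N:ℝ) - 1/2))) with hBdef
  have hBpos : 0 < B := by
    rw [hBdef]
    have : (0:ℝ) < (N:ℝ) - m := by linarith
    positivity
  have step1 : δ^2 * m * N / (N+2) ≤ 2*δ^2*(m:ℝ)*(((N:ℝ)-m) - 1/2)*((N:ℝ) - 1/2)/(N:ℝ)^2 := by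
    rw [div_le_div_iff₀ (by linarith) (by positivity)]
    have h2u : (N:ℝ) ≤ 2*(((N:ℝ)-m) - 1/2) := by linarith
    have hw : (0:ℝ) ≤ ((N:ℝ)-1/2)*((N:ℝ)+2) := by nlinarith
    have key : (N:ℝ)^3 ≤ 2*(((N:ℝ)-m) - 1/2)*((N:ℝ) - 1/2)*((N:ℝ)+2) := by
      nlinarith [mul_le_mul_of_nonneg_right h2u hw, hN3, hNpos]
    have hnn : (0:ℝ) ≤ δ^2 * m := by positivity
    nlinarith [mul_le_mul_of_nonneg_left key hnn]
  have step2 : 2*δ^2*(m:ℝ)*(((N:ℝ)-m) - 1/2)*((N:ℝ) - 1/2)/(N:ℝ)^2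
      = (δ * m * ((N-m:ℕ):ℝ) / N)^2 / (4 * B) := by
    rw [hddR, hBdef]
    have hmm0 : (m:ℝ) ≠ 0 := by linarith
    have hdd0 : ((N:ℝ) - m) ≠ 0 := by linarith
    field_simp
    ring
  have step3 : (δ * m * ((N-m:ℕ):ℝ) / N)^2 / (4 * B)
      ≤ (δ * m * ((N-m:ℕ):ℝ) / N)^2 / (4 * cBF (N-m) m) := by
    apply div_le_div_of_nonneg_left (by positivity) (by linarith) (by linarith)
  calc δ^2 * m * N / (N+2) ≤ 2*δ^2*(m:ℝ)*(((N:ℝ)-m) - 1/2)*((N:ℝ) - 1/2)/(N:ℝ)^2 := step1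
    _ = (δ * m * ((N-m:ℕ):ℝ) / N)^2 / (4 * B) := step2
    _ ≤ _ := step3

/-- Bouman–Fehr classical sampling bound: for a uniformly random size-`m` subset `t`
of `{1,…,N}` with `m < N/2` and any fixed `q ∈ {0,1}^N`,
`Pr(|w(q_t) − w(q_{−t})| > δ) ≤ 2 exp(−δ² m N/(N+2))`. -/
theorem stmt_6 (N m : ℕ) (hm : 0 < m) (hmN : 2 * m < N) (δ : ℝ) (hδ : 0 ≤ δ)
    (q : Fin N → Bool) :
    ((Finset.univ.filter fun t : Finset (Fin N) =>
        t.card = m ∧ δ < |relWtOn q t - relWtOn q tᶜ|).card : ℝ) / (N.choose m) ≤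
      2 * Real.exp (-(δ ^ 2 * m * N) / (N + 2)) := by
  classical
  set E := Finset.univ.filter fun t : Finset (Fin N) =>
      t.card = m ∧ δ < |relWtOn q t - relWtOn q tᶜ| with hE
  set U : Finset (Fin N) := Finset.univ with hU
  set A : Finset (Fin N) := Finset.univ.filter (fun i => q i = true) with hAdef
  set A' : Finset (Fin N) := Finset.univ \ A with hA'def
  have hUcard : U.card = N := by simp [hU]
  have hkN : A.card ≤ N := by
    simpa using Finset.card_le_card (Finset.subset_univ A)
  have hA'card : A'.card = N - A.card := by
    rw [hA'def, Finset.card_sdiff_of_subset (Finset.subset_univ A)]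
    simp
  have hmN' : m ≤ N := by omega
  have hd1 : 1 ≤ N - m := by omega
  have hmRN : (m:ℝ) < (N:ℝ) := by exact_mod_cast (by omega : m < N)
  have hNpos : (0:ℝ) < (N:ℝ) := by linarith [Nat.cast_nonneg (α := ℝ) m]
  set a : ℝ := δ * m * ((N-m:ℕ):ℝ) / N with hadef
  have hddR : ((N-m:ℕ):ℝ) = (N:ℝ) - m := by rw [Nat.cast_sub hmN']
  have haeq : a = δ * (m:ℝ) * ((N:ℝ) - m) / (N:ℝ) := by rw [hadef, hddR]
  have ha0 : 0 ≤ a := by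
    rw [haeq]
    have : (0:ℝ) ≤ (N:ℝ) - m := by linarith
    positivity
  have hcpos : 0 < cBF (N - m) m := cBF_pos _ _ hd1 hm
  set Up := (U.powersetCard m).filter
      (fun t => (m:ℝ) * (A.card:ℝ) / (U.card:ℝ) + a ≤ ((t ∩ A).card : ℝ)) with hUp
  set Low := (U.powersetCard m).filter
      (fun t => (m:ℝ) * (A'.card:ℝ) / (U.card:ℝ) + a ≤ ((t ∩ A').card : ℝ)) with hLow
  have hsub : E ⊆ Up ∪ Low := by
    intro t ht
    rw [hE, Finset.mem_filter] at ht
    obtain ⟨-, htm, habs⟩ := ht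
    have htP : t ∈ U.powersetCard m := Finset.mem_powersetCard.2 ⟨Finset.subset_univ t, htm⟩
    have f1 : t.filter (fun i => q i = true) = t ∩ A := by
      rw [hAdef]; ext i
      simp only [Finset.mem_filter, Finset.mem_inter, Finset.mem_univ, true_and]
      all_goals tauto
    have f2 : tᶜ.filter (fun i => q i = true) = A \ t := by
      rw [hAdef]; ext i
      simp only [Finset.mem_filter, Finset.mem_sdiff, Finset.mem_compl, Finset.mem_univ, true_and]
      all_goals tauto
    have f3 : t ∩ A' = t \ A := by
      rw [hA'def]; ext i
      simp only [Finset.mem_inter, Finset.mem_sdiff, Finset.mem_univ, true_and]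
      all_goals tauto
    have hcompl : tᶜ.card = N - m := by
      rw [Finset.card_compl, htm]; simp
    have hXk : (t ∩ A).card ≤ A.card := Finset.card_le_card Finset.inter_subset_right
    have hXm : (t ∩ A).card ≤ m := htm ▸ Finset.card_le_card Finset.inter_subset_left
    have hsd : (A \ t).card = A.card - (t ∩ A).card := by
      have h := Finset.card_sdiff_add_card_inter A t
      have h2 : (A ∩ t).card = (t ∩ A).card := by rw [Finset.inter_comm]
      omega
    have hsd2 : (t \ A).card = m - (t ∩ A).card := by
      have h := Finset.card_sdiff_add_card_inter t A
      omega
    have hw1 : relWtOn q t = (((t ∩ A).card : ℕ) : ℝ) / (m:ℝ) := by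
      rw [relWtOn, f1, htm]
    have hw2 : relWtOn q tᶜ = ((A.card:ℝ) - (((t ∩ A).card : ℕ):ℝ)) / ((N:ℝ) - (m:ℝ)) := by
      rw [relWtOn, f2, hcompl, hsd, Nat.cast_sub hXk, Nat.cast_sub hmN']
    rw [hw1, hw2] at habs
    have hsplit := real_split (((t ∩ A).card : ℕ) : ℝ) (m:ℝ) ((N:ℝ)-(m:ℝ)) (N:ℝ) (A.card:ℝ) δ
      (by exact_mod_cast hm) (by linarith) (by ring) habs
    rcases hsplit with hup | hlow
    · apply Finset.mem_union_left
      rw [hUp, Finset.mem_filter]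
      refine ⟨htP, ?_⟩
      rw [hUcard, haeq]
      exact hup
    · apply Finset.mem_union_right
      rw [hLow, Finset.mem_filter]
      refine ⟨htP, ?_⟩
      rw [hUcard, haeq]
      have e1 : ((t ∩ A').card : ℝ) = (m:ℝ) - (((t ∩ A).card : ℕ):ℝ) := by
        rw [f3, hsd2, Nat.cast_sub hXm]
      have e2 : (A'.card : ℝ) = (N:ℝ) - (A.card:ℝ) := by
        rw [hA'card, Nat.cast_sub hkN]
      rw [e1, e2]
      exact hlow
  have hUpB := chernoff U A (Finset.subset_univ A) m (by rw [hUcard]; exact hmN') a ha0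
    (by rw [hUcard]; exact hcpos)
  have hLowB := chernoff U A' (Finset.subset_univ A') m (by rw [hUcard]; exact hmN') a ha0
    (by rw [hUcard]; exact hcpos)
  rw [← hUp, hUcard] at hUpB
  rw [← hLow, hUcard] at hLowB
  have hcard : (E.card : ℝ) ≤ (Up.card : ℝ) + (Low.card : ℝ) := by
    have h1 : E.card ≤ (Up ∪ Low).card := Finset.card_le_card hsub
    have h2 := Finset.card_union_le Up Low
    exact_mod_cast le_trans h1 h2
  have hExp : Real.exp (-(a^2) / (4 * cBF (N-m) m)) ≤ Real.exp (-(δ^2*(m:ℝ)*(N:ℝ)) / ((N:ℝ)+2)) := by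
    apply Real.exp_le_exp.2
    rw [neg_div, neg_div, neg_le_neg_iff]
    have := final_numeric N m δ hδ hm hmN
    rw [← hadef] at this
    exact this
  have hCpos : (0:ℝ) < (N.choose m : ℝ) := by exact_mod_cast Nat.choose_pos hmN'
  rw [div_le_iff₀ hCpos]
  calc (E.card:ℝ) ≤ (Up.card : ℝ) + (Low.card : ℝ) := hcard
    _ ≤ 2 * ((N.choose m : ℝ) * Real.exp (-(a^2)/(4*cBF (N-m) m))) := by linarith [hUpB, hLowB]
    _ ≤ 2 * Real.exp (-(δ^2*(m:ℝ)*(N:ℝ))/((N:ℝ)+2)) * (N.choose m : ℝ) := by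
        have h3 := mul_le_mul_of_nonneg_left hExp hCpos.le
        nlinarith [h3]
end

section
/- Let |ψ⟩_{AE} = Σ_{q ∈ J} α_q |q⟩^M |E_q⟩ with J ⊆ A_d^n a subset of basis-M words, and let σ = Σ_{q∈J} |α_q|² |q⟩⟨q|^M ⊗ |E_q⟩⟨E_q|. If the A system is measured in another basis N yielding ρ_{A_N E} (from the pure state) and σ_{A_N E} (from the mixed state), then H_∞(A_N|E)_ρ ≥ H_∞(A_N|E)_σ − log₂|J|. -/
open Kronecker
open scoped ComplexOrder

/-- Renner's conditional quantum min-entropy `H_∞(A|E)_ρ`. -/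
noncomputable def condMinEntropy {A E : Type*} [Fintype A] [Fintype E]
    [DecidableEq A] [DecidableEq E] (ρ : Matrix (A × E) (A × E) ℂ) : ℝ :=
  sSup {lam : ℝ | ∃ σ : Matrix E E ℂ, σ.PosSemidef ∧ σ.trace = 1 ∧
    (((2 : ℝ) ^ (-lam)) • ((1 : Matrix A A ℂ) ⊗ₖ σ) - ρ).PosSemidef}

set_option linter.unusedSectionVars false
set_option maxHeartbeats 1000000

namespace Stmt9

open Complex Matrix Finset

variable {A E : Type*} [Fintype A] [Fintype E] [DecidableEq A] [DecidableEq E]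

/-- block-diagonal (cq) matrix -/
def blockM (f : A → Matrix E E ℂ) : Matrix (A × E) (A × E) ℂ :=
  fun u v => if u.1 = v.1 then f u.1 u.2 v.2 else 0

/-- rank one matrix -/
def rk (v : E → ℂ) : Matrix E E ℂ := fun e e' => v e * (starRingEnd ℂ) (v e')

lemma psd_smul {n : Type*} [Fintype n] {M : Matrix n n ℂ} (hM : M.PosSemidef) {r : ℝ}
    (hr : 0 ≤ r) : (r • M).PosSemidef := by
  refine Matrix.PosSemidef.of_dotProduct_mulVec_nonneg ?_ ?_
  · rw [Matrix.IsHermitian, Matrix.conjTranspose_smul, hM.1.eq, star_trivial]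
  · intro x
    rw [Matrix.smul_mulVec, dotProduct_smul]
    have h0 : (0:ℂ) ≤ (r:ℂ) := Complex.zero_le_real.2 hr
    calc (0:ℂ) = (r:ℂ) * 0 := by ring
    _ ≤ (r:ℂ) * (star x ⬝ᵥ M *ᵥ x) := mul_le_mul_of_nonneg_left (hM.dotProduct_mulVec_nonneg x) h0
    _ = r • (star x ⬝ᵥ M *ᵥ x) := by rw [Complex.real_smul]

lemma psd_add {n : Type*} [Fintype n] {M N : Matrix n n ℂ} (hM : M.PosSemidef)
    (hN : N.PosSemidef) : (M + N).PosSemidef := by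
  refine Matrix.PosSemidef.of_dotProduct_mulVec_nonneg (hM.1.add hN.1) fun x => ?_
  rw [Matrix.add_mulVec, dotProduct_add]
  exact add_nonneg (hM.dotProduct_mulVec_nonneg x) (hN.dotProduct_mulVec_nonneg x)

lemma psd_sum {n ι : Type*} [Fintype n] (s : Finset ι) (f : ι → Matrix n n ℂ)
    (h : ∀ i ∈ s, (f i).PosSemidef) : (∑ i ∈ s, f i).PosSemidef := by
  classical
  induction s using Finset.induction_on with
  | empty => simpa using Matrix.PosSemidef.zero
  | insert _ _ hx ih =>
    rw [Finset.sum_insert hx]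
    exact psd_add (h _ (Finset.mem_insert_self _ _))
      (ih fun i hi => h i (Finset.mem_insert_of_mem hi))

lemma rk_qf (v : E → ℂ) (y : E → ℂ) :
    star y ⬝ᵥ (rk v) *ᵥ y =
      (∑ e, (starRingEnd ℂ) (y e) * v e) *
        (starRingEnd ℂ) (∑ e, (starRingEnd ℂ) (y e) * v e) := by
  simp only [dotProduct, Matrix.mulVec, rk, Pi.star_apply, map_sum, _root_.map_mul,
    Complex.conj_conj]
  rw [Finset.sum_mul_sum]
  congr 1; ext e; rw [Finset.mul_sum]
  congr 1; ext e'
  simp only [Complex.star_def]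
  ring

lemma rk_psd (v : E → ℂ) : (rk v).PosSemidef := by
  refine Matrix.PosSemidef.of_dotProduct_mulVec_nonneg ?_ ?_
  · ext e e'
    simp only [Matrix.conjTranspose_apply, rk, star_mul', Complex.conj_conj, star_def]
    ring
  · intro y
    rw [rk_qf, Complex.mul_conj]
    exact Complex.zero_le_real.2 (Complex.normSq_nonneg _)

lemma mulVec_sum' {n ι : Type*} [Fintype n] (s : Finset ι) (f : ι → Matrix n n ℂ) (y : n → ℂ) :
    (∑ i ∈ s, f i) *ᵥ y = ∑ i ∈ s, f i *ᵥ y := by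
  classical
  induction s using Finset.induction_on with
  | empty => simp
  | insert _ _ hx ih => simp [Finset.sum_insert hx, Matrix.add_mulVec, ih]

lemma dot_sum' {n ι : Type*} [Fintype n] (s : Finset ι) (v : n → ℂ) (f : ι → n → ℂ) :
    dotProduct v (∑ i ∈ s, f i) = ∑ i ∈ s, dotProduct v (f i) := by
  classical
  induction s using Finset.induction_on with
  | empty => simp
  | insert _ _ hx ih => simp [Finset.sum_insert hx, dotProduct_add, ih]

/-- Cauchy–Schwarz operator inequality for a sum of rank-one matrices. -/
lemma cs_psd {ι : Type*} (J : Finset ι) (v : ι → E → ℂ) :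
    ((J.card : ℝ) • (∑ q ∈ J, rk (v q)) - rk (fun e => ∑ q ∈ J, v q e)).PosSemidef := by
  refine Matrix.PosSemidef.of_dotProduct_mulVec_nonneg ?_ ?_
  · have h1 : (∑ q ∈ J, rk (v q)).IsHermitian := (psd_sum J _ fun i _ => rk_psd (v i)).1
    have h2 : (rk (fun e => ∑ q ∈ J, v q e)).IsHermitian := (rk_psd _).1
    rw [Matrix.IsHermitian, Matrix.conjTranspose_sub, Matrix.conjTranspose_smul,
      h1.eq, h2.eq, star_trivial]
  · intro y
    rw [Matrix.sub_mulVec, dotProduct_sub, Matrix.smul_mulVec,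
      dotProduct_smul]
    set z : ι → ℂ := fun q => ∑ e, (starRingEnd ℂ) (y e) * v q e with hz
    have hq1 : star y ⬝ᵥ (∑ q ∈ J, rk (v q)) *ᵥ y
        = ((∑ q ∈ J, Complex.normSq (z q) : ℝ) : ℂ) := by
      rw [mulVec_sum', dot_sum']
      push_cast
      refine Finset.sum_congr rfl fun q _ => ?_
      rw [rk_qf, Complex.mul_conj]
    have hq2 : star y ⬝ᵥ (rk fun e => ∑ q ∈ J, v q e) *ᵥ y
        = ((Complex.normSq (∑ q ∈ J, z q) : ℝ) : ℂ) := by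
      rw [rk_qf, Complex.mul_conj]
      congr 2
      simp_rw [Finset.mul_sum]
      rw [Finset.sum_comm]
    rw [hq1, hq2, Complex.real_smul]
    have key : Complex.normSq (∑ q ∈ J, z q) ≤ J.card * ∑ q ∈ J, Complex.normSq (z q) := by
      have h1 : ‖∑ q ∈ J, z q‖ ≤ ∑ q ∈ J, ‖z q‖ :=
        norm_sum_le _ _
      have h2 : (∑ q ∈ J, ‖z q‖) ^ 2 ≤ J.card * ∑ q ∈ J, ‖z q‖ ^ 2 :=
        sq_sum_le_card_mul_sum_sq
      calc Complex.normSq (∑ q ∈ J, z q) = ‖∑ q ∈ J, z q‖ ^ 2 :=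
            (Complex.sq_norm _).symm
      _ ≤ (∑ q ∈ J, ‖z q‖) ^ 2 :=
            pow_le_pow_left₀ (norm_nonneg _) h1 2
      _ ≤ J.card * ∑ q ∈ J, ‖z q‖ ^ 2 := h2
      _ = J.card * ∑ q ∈ J, Complex.normSq (z q) := by
            simp_rw [Complex.sq_norm]
    have h0 : (0:ℝ) ≤ J.card * (∑ q ∈ J, Complex.normSq (z q))
        - Complex.normSq (∑ q ∈ J, z q) := by linarith
    calc (0:ℂ) ≤ ((J.card * (∑ q ∈ J, Complex.normSq (z q))
          - Complex.normSq (∑ q ∈ J, z q) : ℝ) : ℂ) := Complex.zero_le_real.2 h0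
    _ = _ := by push_cast; ring

lemma blockM_psd (f : A → Matrix E E ℂ) (hf : ∀ x, (f x).PosSemidef) :
    (blockM f).PosSemidef := by
  refine Matrix.PosSemidef.of_dotProduct_mulVec_nonneg ?_ ?_
  · ext u v
    rcases u with ⟨x, e⟩; rcases v with ⟨x', e'⟩
    simp only [Matrix.conjTranspose_apply, blockM, star_def]
    by_cases h : x = x'
    · subst h
      simp only [if_pos rfl]
      have := congrFun (congrFun (hf x).1.eq e) e'
      simpa [Matrix.conjTranspose_apply] using this
    · simp [h, Ne.symm h]
  · intro y
    have expand : star y ⬝ᵥ (blockM f) *ᵥ y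
        = ∑ x, star (fun e => y (x, e)) ⬝ᵥ (f x) *ᵥ (fun e => y (x, e)) := by
      simp only [dotProduct, Matrix.mulVec, blockM, Pi.star_apply]
      rw [Fintype.sum_prod_type]
      refine Finset.sum_congr rfl fun x _ => ?_
      refine Finset.sum_congr rfl fun e _ => ?_
      congr 1
      rw [Fintype.sum_prod_type]
      rw [Finset.sum_eq_single x]
      · simp
      · intro b _ hb; simp [Ne.symm hb]
      · simp
    rw [expand]
    exact Finset.sum_nonneg fun x _ => (hf x).dotProduct_mulVec_nonneg _

lemma blockM_sub (f g : A → Matrix E E ℂ) :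
    blockM f - blockM g = blockM (fun x => f x - g x) := by
  ext u v
  simp only [Matrix.sub_apply, blockM]
  split <;> simp

lemma blockM_smul (r : ℝ) (f : A → Matrix E E ℂ) :
    r • blockM f = blockM (fun x => r • f x) := by
  ext u v
  simp only [Matrix.smul_apply, blockM]
  split <;> simp

lemma kron_eq_blockM (τ : Matrix E E ℂ) :
    (1 : Matrix A A ℂ) ⊗ₖ τ = blockM (fun _ => τ) := by
  ext u v
  rcases u with ⟨x, e⟩; rcases v with ⟨x', e'⟩
  simp only [Matrix.kroneckerMap_apply, blockM, Matrix.one_apply]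
  split <;> simp

lemma blockM_trace (f : A → Matrix E E ℂ) :
    (blockM f).trace = ∑ x, (f x).trace := by
  simp only [Matrix.trace, Matrix.diag, blockM]
  rw [Fintype.sum_prod_type]
  simp

lemma psd_diag_nonneg {n : Type*} [Fintype n] [DecidableEq n] {M : Matrix n n ℂ}
    (hM : M.PosSemidef) (u : n) : 0 ≤ M u u := by
  have := hM.dotProduct_mulVec_nonneg (Pi.single u 1)
  simpa [dotProduct, Matrix.mulVec, Pi.single_apply, Finset.sum_ite_eq,
    apply_ite, mul_ite, ite_mul] using this

lemma psd_trace_nonneg {n : Type*} [Fintype n] [DecidableEq n] {M : Matrix n n ℂ}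
    (hM : M.PosSemidef) : 0 ≤ M.trace :=
  Finset.sum_nonneg fun u _ => psd_diag_nonneg hM u

lemma hnorm_cast (z : ℂ) : ((‖z‖^2 : ℝ) : ℂ) = z * (starRingEnd ℂ) z := by
  rw [Complex.mul_conj, Complex.sq_norm]

lemma sum_mul_conj_swap {ι κ : Type*} [Fintype ι] (s : Finset κ) (g : κ → ι → ℂ) :
    ∑ i, (∑ q ∈ s, g q i) * (starRingEnd ℂ) (∑ q ∈ s, g q i)
      = ∑ q ∈ s, ∑ q' ∈ s, ∑ i, g q i * (starRingEnd ℂ) (g q' i) := by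
  have h1 : ∀ i, (∑ q ∈ s, g q i) * (starRingEnd ℂ) (∑ q ∈ s, g q i)
      = ∑ q ∈ s, ∑ q' ∈ s, g q i * (starRingEnd ℂ) (g q' i) := by
    intro i
    rw [map_sum, Finset.sum_mul_sum]
  simp_rw [h1]
  rw [Finset.sum_comm]
  refine Finset.sum_congr rfl fun q _ => ?_
  rw [Finset.sum_comm]

/-- Parseval-type reduction using column orthonormality of `U`. -/
lemma ortho_reduce {ι κ : Type*} [Fintype ι] [Fintype κ] [DecidableEq κ]
    (U : ι → κ → ℂ)
    (hU : ∀ a b, (∑ x, (starRingEnd ℂ) (U x a) * U x b) = if a = b then 1 else 0)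
    (c : κ → ℂ) :
    ∑ x, (∑ a, (starRingEnd ℂ) (U x a) * c a) *
        (starRingEnd ℂ) (∑ a, (starRingEnd ℂ) (U x a) * c a)
      = ∑ a, c a * (starRingEnd ℂ) (c a) := by
  rw [sum_mul_conj_swap Finset.univ (fun a x => (starRingEnd ℂ) (U x a) * c a)]
  have h2 : ∀ a b, (∑ x, ((starRingEnd ℂ) (U x a) * c a) *
      (starRingEnd ℂ) ((starRingEnd ℂ) (U x b) * c b))
      = (c a * (starRingEnd ℂ) (c b)) * ∑ x, (starRingEnd ℂ) (U x a) * U x b := by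
    intro a b
    rw [Finset.mul_sum]
    refine Finset.sum_congr rfl fun x _ => ?_
    simp only [_root_.map_mul, Complex.conj_conj]
    ring
  simp_rw [h2, hU]
  simp [Finset.sum_ite_eq, mul_ite]

/-- rows orthonormal implies columns orthonormal (square unitary). -/
lemma col_ortho {κ : Type*} [Fintype κ] [DecidableEq κ] (U : κ → κ → ℂ)
    (hU : ∀ a b, (∑ s, (starRingEnd ℂ) (U a s) * U b s) = if a = b then 1 else 0) :
    ∀ a b, (∑ x, (starRingEnd ℂ) (U x a) * U x b) = if a = b then 1 else 0 := by
  intro a b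
  set M : Matrix κ κ ℂ := Matrix.of U with hM
  have h1 : M * Mᴴ = 1 := by
    ext i j
    simp only [Matrix.mul_apply, Matrix.conjTranspose_apply, Matrix.one_apply, hM,
      Matrix.of_apply, star_def]
    rw [show (∑ s, U i s * (starRingEnd ℂ) (U j s))
        = ∑ s, (starRingEnd ℂ) ((starRingEnd ℂ) (U i s) * U j s) from
      Finset.sum_congr rfl fun s _ => by
        simp only [_root_.map_mul, Complex.conj_conj, mul_comm]]
    rw [← map_sum, hU i j]
    split <;> simp
  have h2 : Mᴴ * M = 1 := mul_eq_one_comm.mp h1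
  have h3 := congrFun (congrFun (congrArg (fun M : Matrix κ κ ℂ => (fun i j => M i j)) h2) a) b
  simp only [Matrix.mul_apply, Matrix.conjTranspose_apply, Matrix.one_apply, hM,
    Matrix.of_apply, star_def] at h3
  rw [← h3]

/-- rows orthonormal in the `hM` form imply `∑ a, M q a * conj (M q' a) = δ`. -/
lemma row_ortho' {κ : Type*} [Fintype κ] [DecidableEq κ] (Mb : κ → κ → ℂ)
    (hM : ∀ a b, (∑ s, (starRingEnd ℂ) (Mb a s) * Mb b s) = if a = b then 1 else 0)
    (q q' : κ) : ∑ a, Mb q a * (starRingEnd ℂ) (Mb q' a) = if q = q' then 1 else 0 := by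
  rw [show (∑ a, Mb q a * (starRingEnd ℂ) (Mb q' a))
      = ∑ a, (starRingEnd ℂ) ((starRingEnd ℂ) (Mb q a) * Mb q' a) from
    Finset.sum_congr rfl fun a _ => by
      simp only [_root_.map_mul, Complex.conj_conj, mul_comm]]
  rw [← map_sum, hM q q']
  split <;> simp

/-- `|⟨u,v⟩| ≤ 1` for unit vectors. -/
lemma beta_le_one {κ : Type*} [Fintype κ] (u v : κ → ℂ)
    (hu : (∑ s, (starRingEnd ℂ) (u s) * u s) = 1)
    (hv : (∑ s, (starRingEnd ℂ) (v s) * v s) = 1) :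
    ‖∑ a, (starRingEnd ℂ) (u a) * v a‖ ≤ 1 := by
  have hu' : ∑ s, ‖u s‖^2 = 1 := by
    have h : ((∑ s, ‖u s‖^2 : ℝ) : ℂ) = 1 := by
      rw [Complex.ofReal_sum]
      rw [show (∑ s, ((‖u s‖^2 : ℝ) : ℂ)) = ∑ s, (starRingEnd ℂ) (u s) * u s from
        Finset.sum_congr rfl fun s _ => by rw [hnorm_cast]; ring, hu]
    exact_mod_cast h
  have hv' : ∑ s, ‖v s‖^2 = 1 := by
    have h : ((∑ s, ‖v s‖^2 : ℝ) : ℂ) = 1 := by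
      rw [Complex.ofReal_sum]
      rw [show (∑ s, ((‖v s‖^2 : ℝ) : ℂ)) = ∑ s, (starRingEnd ℂ) (v s) * v s from
        Finset.sum_congr rfl fun s _ => by rw [hnorm_cast]; ring, hv]
    exact_mod_cast h
  have h1 : ‖∑ a, (starRingEnd ℂ) (u a) * v a‖ ≤ ∑ a, ‖u a‖ * ‖v a‖ := by
    refine (norm_sum_le _ _).trans (le_of_eq (Finset.sum_congr rfl fun a _ => ?_))
    rw [norm_mul, RCLike.norm_conj]
  have h2 : (∑ a, ‖u a‖ * ‖v a‖) ^ 2 ≤ (∑ a, ‖u a‖^2) * ∑ a, ‖v a‖^2 :=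
    Finset.sum_mul_sq_le_sq_mul_sq _ _ _
  nlinarith [norm_nonneg (∑ a, (starRingEnd ℂ) (u a) * v a),
    Finset.sum_nonneg (fun a (_ : a ∈ Finset.univ) =>
      mul_nonneg (norm_nonneg (u a)) (norm_nonneg (v a)))]

lemma trace_psi {κ E : Type*} [Fintype κ] [DecidableEq κ] [Fintype E]
    (Mb Nb : κ → κ → ℂ)
    (hM : ∀ a b, (∑ s, (starRingEnd ℂ) (Mb a s) * Mb b s) = if a = b then 1 else 0)
    (hNcol : ∀ a b, (∑ x, (starRingEnd ℂ) (Nb x a) * Nb x b) = if a = b then 1 else 0)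
    (J : Finset κ) (α : κ → ℂ) (hα : ∑ q ∈ J, ‖α q‖ ^ 2 = 1)
    (Evec : κ → E → ℂ) (hE : ∀ q ∈ J, ∑ e, ‖Evec q e‖ ^ 2 = 1) :
    ∑ x, ∑ e, (∑ a, (starRingEnd ℂ) (Nb x a) * ∑ q ∈ J, α q * Mb q a * Evec q e) *
      (starRingEnd ℂ) (∑ a, (starRingEnd ℂ) (Nb x a) * ∑ q ∈ J, α q * Mb q a * Evec q e)
      = 1 := by
  rw [Finset.sum_comm]
  have step1 : ∀ e, (∑ x, (∑ a, (starRingEnd ℂ) (Nb x a) * ∑ q ∈ J, α q * Mb q a * Evec q e) *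
      (starRingEnd ℂ) (∑ a, (starRingEnd ℂ) (Nb x a) * ∑ q ∈ J, α q * Mb q a * Evec q e))
      = ∑ a, (∑ q ∈ J, α q * Mb q a * Evec q e) *
          (starRingEnd ℂ) (∑ q ∈ J, α q * Mb q a * Evec q e) := fun e =>
    ortho_reduce Nb hNcol (fun a => ∑ q ∈ J, α q * Mb q a * Evec q e)
  calc ∑ e, ∑ x, (∑ a, (starRingEnd ℂ) (Nb x a) * ∑ q ∈ J, α q * Mb q a * Evec q e) *
        (starRingEnd ℂ) (∑ a, (starRingEnd ℂ) (Nb x a) * ∑ q ∈ J, α q * Mb q a * Evec q e)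
      = ∑ e, ∑ a, (∑ q ∈ J, α q * Mb q a * Evec q e) *
          (starRingEnd ℂ) (∑ q ∈ J, α q * Mb q a * Evec q e) :=
        Finset.sum_congr rfl fun e _ => step1 e
    _ = ∑ p : κ × E, (∑ q ∈ J, α q * Mb q p.1 * Evec q p.2) *
          (starRingEnd ℂ) (∑ q ∈ J, α q * Mb q p.1 * Evec q p.2) := by
        rw [Fintype.sum_prod_type, Finset.sum_comm]
    _ = ∑ q ∈ J, ∑ q' ∈ J, ∑ p : κ × E,
          (α q * Mb q p.1 * Evec q p.2) * (starRingEnd ℂ) (α q' * Mb q' p.1 * Evec q' p.2) :=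
        sum_mul_conj_swap (ι := κ × E) J (fun q p => α q * Mb q p.1 * Evec q p.2)
    _ = ∑ q ∈ J, ∑ q' ∈ J, (α q * (starRingEnd ℂ) (α q')) *
          ((if q = q' then 1 else 0) * ∑ e, Evec q e * (starRingEnd ℂ) (Evec q' e)) := by
        refine Finset.sum_congr rfl fun q _ => Finset.sum_congr rfl fun q' _ => ?_
        rw [← row_ortho' Mb hM q q']
        rw [Fintype.sum_prod_type]
        have inner : ∀ a, (∑ e, (α q * Mb q a * Evec q e) *
            (starRingEnd ℂ) (α q' * Mb q' a * Evec q' e))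
            = (α q * (starRingEnd ℂ) (α q')) * (Mb q a * (starRingEnd ℂ) (Mb q' a)) *
              (∑ e, Evec q e * (starRingEnd ℂ) (Evec q' e)) := by
          intro a
          rw [Finset.mul_sum]
          refine Finset.sum_congr rfl fun e _ => ?_
          simp only [_root_.map_mul]
          ring
        simp_rw [inner]
        rw [← Finset.sum_mul, ← Finset.mul_sum]
        ring
    _ = ∑ q ∈ J, (α q * (starRingEnd ℂ) (α q)) *
          ∑ e, Evec q e * (starRingEnd ℂ) (Evec q e) := by
        refine Finset.sum_congr rfl fun q hq => ?_
        simp only [ite_mul, one_mul, zero_mul, mul_ite, mul_zero]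
        rw [Finset.sum_ite_eq J q
          (fun q' => α q * (starRingEnd ℂ) (α q') *
            ∑ e, Evec q e * (starRingEnd ℂ) (Evec q' e)), if_pos hq]
    _ = ∑ q ∈ J, ((‖α q‖^2 : ℝ) : ℂ) := by
        refine Finset.sum_congr rfl fun q hq => ?_
        have hEq : (∑ e, Evec q e * (starRingEnd ℂ) (Evec q e)) = 1 := by
          rw [show (∑ e, Evec q e * (starRingEnd ℂ) (Evec q e))
              = ∑ e, ((‖Evec q e‖^2 : ℝ) : ℂ) from
            Finset.sum_congr rfl fun e _ => (hnorm_cast _).symm]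
          rw [← Complex.ofReal_sum, hE q hq]
          norm_num
        rw [hEq, mul_one, hnorm_cast]
    _ = 1 := by rw [← Complex.ofReal_sum, hα]; norm_num

theorem main_aux (J : Finset A) (hJne : J.Nonempty)
    (ψ : A → E → ℂ) (w : A → A → E → ℂ)
    (hψ : ∀ x, ψ x = fun e => ∑ q ∈ J, w x q e)
    (τ0 : Matrix E E ℂ) (hτ0psd : τ0.PosSemidef) (hτ0tr : τ0.trace = 1)
    (hτ0dom : ∀ x, (τ0 - ∑ q ∈ J, rk (w x q)).PosSemidef)
    (htrρ : (blockM (fun x => rk (ψ x))).trace = 1) :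
    condMinEntropy (blockM fun x => rk (ψ x)) ≥
      condMinEntropy (blockM fun x => ∑ q ∈ J, rk (w x q)) - Real.logb 2 J.card := by
  classical
  obtain ⟨q0, hq0⟩ := hJne
  have hAne : Nonempty A := ⟨q0⟩
  set c : ℝ := Real.logb 2 J.card with hc
  have hkpos : (0:ℝ) < J.card := by exact_mod_cast Finset.card_pos.mpr ⟨q0, hq0⟩
  have hk1 : (1:ℝ) ≤ J.card := by
    exact_mod_cast Nat.one_le_iff_ne_zero.mpr (Finset.card_ne_zero_of_mem hq0)
  have h2c : (2:ℝ) ^ c = J.card := Real.rpow_logb (by norm_num) (by norm_num) hkpos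
  have hc0 : 0 ≤ c := Real.logb_nonneg one_lt_two hk1
  set ρM : Matrix (A × E) (A × E) ℂ := blockM fun x => rk (ψ x) with hρM
  set σM : Matrix (A × E) (A × E) ℂ := blockM fun x => ∑ q ∈ J, rk (w x q) with hσM
  -- the Cauchy–Schwarz dominance
  have hD : ((J.card : ℝ) • σM - ρM).PosSemidef := by
    rw [hσM, hρM, blockM_smul, blockM_sub]
    refine blockM_psd _ fun x => ?_
    rw [hψ x]
    exact cs_psd J (w x)
  have hdom : ((1 : Matrix A A ℂ) ⊗ₖ τ0 - σM).PosSemidef := by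
    rw [hσM, kron_eq_blockM, blockM_sub]
    exact blockM_psd _ hτ0dom
  -- base membership
  have hbase : (-c) ∈ {lam : ℝ | ∃ σ : Matrix E E ℂ, σ.PosSemidef ∧ σ.trace = 1 ∧
      (((2 : ℝ) ^ (-lam)) • ((1 : Matrix A A ℂ) ⊗ₖ σ) - ρM).PosSemidef} := by
    refine ⟨τ0, hτ0psd, hτ0tr, ?_⟩
    have h1 : (2:ℝ) ^ (-(-c)) = (J.card : ℝ) := by rw [neg_neg, h2c]
    rw [h1, show (J.card : ℝ) • ((1 : Matrix A A ℂ) ⊗ₖ τ0) - ρM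
        = (J.card : ℝ) • ((1 : Matrix A A ℂ) ⊗ₖ τ0 - σM) + ((J.card : ℝ) • σM - ρM) by
      rw [smul_sub]; abel]
    exact psd_add (psd_smul hdom hkpos.le) hD
  -- shift membership
  have hshift : ∀ lam : ℝ, lam ∈ {lam : ℝ | ∃ σ : Matrix E E ℂ, σ.PosSemidef ∧ σ.trace = 1 ∧
      (((2 : ℝ) ^ (-lam)) • ((1 : Matrix A A ℂ) ⊗ₖ σ) - σM).PosSemidef} →
      (lam - c) ∈ {lam : ℝ | ∃ σ : Matrix E E ℂ, σ.PosSemidef ∧ σ.trace = 1 ∧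
      (((2 : ℝ) ^ (-lam)) • ((1 : Matrix A A ℂ) ⊗ₖ σ) - ρM).PosSemidef} := by
    rintro lam ⟨τ, hτ1, hτ2, hτ3⟩
    refine ⟨τ, hτ1, hτ2, ?_⟩
    have h1 : (2:ℝ) ^ (-(lam - c)) = (J.card : ℝ) * (2:ℝ) ^ (-lam) := by
      rw [show -(lam - c) = c + -lam by ring, Real.rpow_add (by norm_num : (0:ℝ) < 2), h2c]
    rw [h1, show ((J.card : ℝ) * (2:ℝ) ^ (-lam)) • ((1 : Matrix A A ℂ) ⊗ₖ τ) - ρM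
        = (J.card : ℝ) • ((2:ℝ) ^ (-lam) • ((1 : Matrix A A ℂ) ⊗ₖ τ) - σM)
          + ((J.card : ℝ) • σM - ρM) by
      rw [smul_sub, smul_smul]; abel]
    exact psd_add (psd_smul hτ3 hkpos.le) hD
  -- bounded above
  have hbdd : BddAbove {lam : ℝ | ∃ σ : Matrix E E ℂ, σ.PosSemidef ∧ σ.trace = 1 ∧
      (((2 : ℝ) ^ (-lam)) • ((1 : Matrix A A ℂ) ⊗ₖ σ) - ρM).PosSemidef} := by
    refine ⟨Real.logb 2 (Fintype.card A), ?_⟩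
    rintro lam ⟨τ, hτ1, hτ2, hτ3⟩
    have htr := psd_trace_nonneg hτ3
    rw [Matrix.trace_sub, Matrix.trace_smul, Matrix.trace_kronecker, Matrix.trace_one,
      hτ2, htrρ] at htr
    have hcard0 : (0:ℝ) < Fintype.card A := by
      exact_mod_cast Fintype.card_pos
    have htr' : (1:ℝ) ≤ (2:ℝ) ^ (-lam) * Fintype.card A := by
      have heq : ((2:ℝ) ^ (-lam)) • ((Fintype.card A : ℂ) * 1) - 1
          = (((2:ℝ) ^ (-lam) * (Fintype.card A : ℝ) - 1 : ℝ) : ℂ) := by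
        push_cast [Complex.real_smul]
        ring
      rw [heq] at htr
      have := Complex.zero_le_real.mp htr
      linarith
    have hrp : (0:ℝ) < (2:ℝ) ^ (-lam) := Real.rpow_pos_of_pos (by norm_num) _
    have hinv : (Fintype.card A : ℝ)⁻¹ ≤ (2:ℝ) ^ (-lam) := by
      rw [inv_eq_one_div, div_le_iff₀ hcard0]
      linarith
    have hlog := (Real.logb_le_logb one_lt_two (inv_pos.mpr hcard0) hrp).mpr hinv
    rw [Real.logb_rpow (by norm_num) (by norm_num), Real.logb_inv] at hlog
    linarith
  -- conclude
  unfold condMinEntropy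
  rw [ge_iff_le, sub_le_iff_le_add]
  refine Real.sSup_le (fun lam hlam => ?_) ?_
  · have h := le_csSup hbdd (hshift lam hlam)
    linarith
  · have h := le_csSup hbdd hbase
    linarith

end Stmt9

/-- Bouman–Fehr superposition lemma.  Let `|ψ⟩ = Σ_{q∈J} α_q |q⟩^M |E_q⟩` and let
`σ = Σ_{q∈J} |α_q|² |q⟩⟨q|^M ⊗ |E_q⟩⟨E_q|` be the corresponding mixture.  Measuring the
`A` system in another orthonormal basis `Nb` gives cq-states `ρ_{A_N E}` and
`σ_{A_N E}`, and `H_∞(A_N|E)_ρ ≥ H_∞(A_N|E)_σ − log₂|J|`. -/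
theorem stmt_9 (n d : ℕ) {E : Type*} [Fintype E] [DecidableEq E]
    (Mb Nb : (Fin n → Fin d) → (Fin n → Fin d) → ℂ)
    (hM : ∀ a b, (∑ s, (starRingEnd ℂ) (Mb a s) * Mb b s) = if a = b then 1 else 0)
    (hN : ∀ a b, (∑ s, (starRingEnd ℂ) (Nb a s) * Nb b s) = if a = b then 1 else 0)
    (J : Finset (Fin n → Fin d)) (hJ : J.Nonempty)
    (α : (Fin n → Fin d) → ℂ) (hα : ∑ q ∈ J, ‖α q‖ ^ 2 = 1)
    (Evec : (Fin n → Fin d) → E → ℂ) (hE : ∀ q ∈ J, ∑ e, ‖Evec q e‖ ^ 2 = 1) :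
    condMinEntropy (A := Fin n → Fin d) (E := E)
        (fun u v => if u.1 = v.1 then
          (∑ a, (starRingEnd ℂ) (Nb u.1 a) * ∑ q ∈ J, α q * Mb q a * Evec q u.2) *
            (starRingEnd ℂ)
              (∑ a, (starRingEnd ℂ) (Nb u.1 a) * ∑ q ∈ J, α q * Mb q a * Evec q v.2)
          else 0) ≥
      condMinEntropy (A := Fin n → Fin d) (E := E)
        (fun u v => if u.1 = v.1 then
          ∑ q ∈ J, (‖α q‖ ^ 2 : ℂ) * (‖∑ a, (starRingEnd ℂ) (Nb u.1 a) * Mb q a‖ ^ 2 : ℂ)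
            * Evec q u.2 * (starRingEnd ℂ) (Evec q v.2)
          else 0) - Real.logb 2 J.card := by
  classical
  have hNcol := Stmt9.col_ortho Nb hN
  -- the post-measurement pure-state amplitudes and their mixture components
  have hψw : ∀ x : Fin n → Fin d,
      (fun e => ∑ a, (starRingEnd ℂ) (Nb x a) * ∑ q ∈ J, α q * Mb q a * Evec q e)
        = fun e => ∑ q ∈ J,
            α q * (∑ a, (starRingEnd ℂ) (Nb x a) * Mb q a) * Evec q e := by
    intro x; funext e
    rw [show (∑ a, (starRingEnd ℂ) (Nb x a) * ∑ q ∈ J, α q * Mb q a * Evec q e)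
        = ∑ a, ∑ q ∈ J, (starRingEnd ℂ) (Nb x a) * (α q * Mb q a * Evec q e) from
      Finset.sum_congr rfl fun a _ => Finset.mul_sum _ _ _]
    rw [Finset.sum_comm]
    refine Finset.sum_congr rfl fun q _ => ?_
    rw [Finset.mul_sum, Finset.sum_mul]
    refine Finset.sum_congr rfl fun a _ => by ring
  -- the witness environment state
  set τ0 : Matrix E E ℂ := ∑ q ∈ J, (‖α q‖^2 : ℝ) • Stmt9.rk (Evec q) with hτ0
  have hτ0psd : τ0.PosSemidef := by
    rw [hτ0]
    exact Stmt9.psd_sum _ _ fun q _ => Stmt9.psd_smul (Stmt9.rk_psd _) (sq_nonneg _)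
  have hrk_tr : ∀ q ∈ J, (Stmt9.rk (Evec q)).trace = 1 := by
    intro q hq
    have : (Stmt9.rk (Evec q)).trace = ∑ e, Evec q e * (starRingEnd ℂ) (Evec q e) := by
      simp [Matrix.trace, Matrix.diag, Stmt9.rk]
    rw [this, show (∑ e, Evec q e * (starRingEnd ℂ) (Evec q e))
        = ∑ e, ((‖Evec q e‖^2 : ℝ) : ℂ) from
      Finset.sum_congr rfl fun e _ => (Stmt9.hnorm_cast _).symm,
      ← Complex.ofReal_sum, hE q hq]
    norm_num
  have hτ0tr : τ0.trace = 1 := by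
    rw [hτ0, Matrix.trace_sum]
    rw [show (∑ q ∈ J, ((‖α q‖^2 : ℝ) • Stmt9.rk (Evec q)).trace)
        = ∑ q ∈ J, ((‖α q‖^2 : ℝ) : ℂ) from Finset.sum_congr rfl fun q hq => by
      rw [Matrix.trace_smul, hrk_tr q hq, Complex.real_smul, mul_one]]
    rw [← Complex.ofReal_sum, hα]
    norm_num
  have hτ0dom : ∀ x, (τ0 - ∑ q ∈ J, Stmt9.rk (fun e =>
      α q * (∑ a, (starRingEnd ℂ) (Nb x a) * Mb q a) * Evec q e)).PosSemidef := by
    intro x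
    have hrkw : ∀ q, Stmt9.rk (fun e =>
        α q * (∑ a, (starRingEnd ℂ) (Nb x a) * Mb q a) * Evec q e)
        = (‖α q * (∑ a, (starRingEnd ℂ) (Nb x a) * Mb q a)‖^2 : ℝ) • Stmt9.rk (Evec q) := by
      intro q
      ext e e'
      simp only [Stmt9.rk, Matrix.smul_apply, smul_eq_mul, Complex.real_smul]
      rw [Stmt9.hnorm_cast]
      simp only [_root_.map_mul]
      ring
    rw [hτ0, ← Finset.sum_sub_distrib]
    refine Stmt9.psd_sum _ _ fun q hq => ?_
    rw [hrkw q, ← sub_smul]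
    refine Stmt9.psd_smul (Stmt9.rk_psd _) ?_
    have hb := Stmt9.beta_le_one (Nb x) (Mb q) (by simpa using hN x x) (by simpa using hM q q)
    rw [norm_mul]
    have hb0 : (0:ℝ) ≤ ‖∑ a, (starRingEnd ℂ) (Nb x a) * Mb q a‖ := norm_nonneg _
    have hb2 : ‖∑ a, (starRingEnd ℂ) (Nb x a) * Mb q a‖ ^ 2 ≤ 1 := by nlinarith
    have : (‖α q‖ * ‖∑ a, (starRingEnd ℂ) (Nb x a) * Mb q a‖) ^ 2
        = ‖α q‖ ^ 2 * ‖∑ a, (starRingEnd ℂ) (Nb x a) * Mb q a‖ ^ 2 := by ring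
    rw [this]
    nlinarith [sq_nonneg (‖α q‖)]
  -- the trace of ρ is 1
  have htrρ : (Stmt9.blockM (fun x => Stmt9.rk (fun e =>
      ∑ a, (starRingEnd ℂ) (Nb x a) * ∑ q ∈ J, α q * Mb q a * Evec q e))).trace = 1 := by
    rw [Stmt9.blockM_trace]
    have hstep : ∀ x : Fin n → Fin d, (Stmt9.rk (fun e =>
        ∑ a, (starRingEnd ℂ) (Nb x a) * ∑ q ∈ J, α q * Mb q a * Evec q e)).trace
        = ∑ e, (∑ a, (starRingEnd ℂ) (Nb x a) * ∑ q ∈ J, α q * Mb q a * Evec q e) *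
            (starRingEnd ℂ) (∑ a, (starRingEnd ℂ) (Nb x a) * ∑ q ∈ J, α q * Mb q a * Evec q e) := by
      intro x
      simp [Matrix.trace, Matrix.diag, Stmt9.rk]
    rw [Finset.sum_congr rfl fun x _ => hstep x]
    exact Stmt9.trace_psi Mb Nb hM hNcol J α hα Evec hE
  -- identify the two matrices with block forms
  have hρeq : condMinEntropy (A := Fin n → Fin d) (E := E)
        (fun u v => if u.1 = v.1 then
          (∑ a, (starRingEnd ℂ) (Nb u.1 a) * ∑ q ∈ J, α q * Mb q a * Evec q u.2) *
            (starRingEnd ℂ)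
              (∑ a, (starRingEnd ℂ) (Nb u.1 a) * ∑ q ∈ J, α q * Mb q a * Evec q v.2)
          else 0)
      = condMinEntropy (Stmt9.blockM (fun x => Stmt9.rk (fun e =>
          ∑ a, (starRingEnd ℂ) (Nb x a) * ∑ q ∈ J, α q * Mb q a * Evec q e))) := rfl
  have hσeq : (fun (u v : (Fin n → Fin d) × E) => if u.1 = v.1 then
          ∑ q ∈ J, (‖α q‖ ^ 2 : ℂ) * (‖∑ a, (starRingEnd ℂ) (Nb u.1 a) * Mb q a‖ ^ 2 : ℂ)
            * Evec q u.2 * (starRingEnd ℂ) (Evec q v.2)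
          else 0)
      = Stmt9.blockM (fun x => ∑ q ∈ J, Stmt9.rk (fun e =>
          α q * (∑ a, (starRingEnd ℂ) (Nb x a) * Mb q a) * Evec q e)) := by
    funext u v
    rcases u with ⟨x, e⟩; rcases v with ⟨x', e'⟩
    simp only [Stmt9.blockM]
    by_cases h : x = x'
    · simp only [if_pos h]
      rw [Matrix.sum_apply]
      refine Finset.sum_congr rfl fun q hq => ?_
      simp only [Stmt9.rk]
      rw [← Complex.ofReal_pow, ← Complex.ofReal_pow, Stmt9.hnorm_cast, Stmt9.hnorm_cast]
      simp only [_root_.map_mul]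
      ring
    · simp [h]
  rw [hρeq, hσeq]
  exact Stmt9.main_aux J hJ
    (fun x e => ∑ a, (starRingEnd ℂ) (Nb x a) * ∑ q ∈ J, α q * Mb q a * Evec q e)
    (fun x q e => α q * (∑ a, (starRingEnd ℂ) (Nb x a) * Mb q a) * Evec q e)
    hψw τ0 hτ0psd hτ0tr hτ0dom htrρ
end

section
/- Let |ψ⟩ = Σ_{x ∈ B_p^n} Σ_{y ∈ J} |g^{p+1}(x;y)⟩ |E_{x,y}⟩ be a (normalized) state with J ⊆ {0,1}^n, where the |E_{x,y}⟩ are subnormalized ancilla vectors. If the first qubit of each of the n GHZ registers is measured in the computational (Z) basis and the remaining p qubits of each register are discarded, producing the cq-state ρ_{ZE}, then H_∞(Z|E)_ρ ≥ n − log₂|J|. -/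
open Kronecker
open scoped ComplexOrder

/-- Amplitudes of the GHZ state `|g^{p+1}(x;y)⟩ = (1/√2)(|0,x⟩ + (−1)^y |1,x̄⟩)`. -/
noncomputable def ghzAmp (p : ℕ) (x : Fin p → Bool) (y : Bool) :
    (Fin (p + 1) → Bool) → ℂ := fun s =>
  (Real.sqrt 2)⁻¹ *
    ((if s = Fin.cons false x then 1 else 0) +
      (if y then (-1 : ℂ) else 1) * (if s = Fin.cons true (fun i => !x i) then 1 else 0))

namespace Stmt10

def sgn1 (b c : Bool) : ℂ := if b then (if c then -1 else 1) else 1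

def sgn {n : ℕ} (z y : Fin n → Bool) : ℂ := ∏ i, sgn1 (z i) (y i)

def flipx {n p : ℕ} (z : Fin n → Bool) (r : Fin n → Fin p → Bool) : Fin n → Fin p → Bool :=
  fun i j => xor (r i j) (z i)

lemma flipx_flipx {n p : ℕ} (z : Fin n → Bool) (r : Fin n → Fin p → Bool) :
    flipx z (flipx z r) = r := by
  funext i j; simp [flipx, Bool.xor_assoc]

lemma abs_sgn1 (b c : Bool) : ‖sgn1 b c‖ = 1 := by
  cases b <;> cases c <;> simp [sgn1]

lemma abs_sgn {n : ℕ} (z y : Fin n → Bool) : ‖sgn z y‖ = 1 := by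
  simp [sgn, norm_prod, abs_sgn1]

lemma conj_sgn {n : ℕ} (z y : Fin n → Bool) : (starRingEnd ℂ) (sgn z y) = sgn z y := by
  simp only [sgn, map_prod]
  refine Finset.prod_congr rfl fun i _ => ?_
  cases z i <;> cases y i <;> simp [sgn1]

lemma sum_sgn_mul {n : ℕ} (y y' : Fin n → Bool) :
    ∑ z : Fin n → Bool, sgn z y * sgn z y' = if y = y' then (2 : ℂ) ^ n else 0 := by
  have h1 : ∀ z : Fin n → Bool, sgn z y * sgn z y'
      = ∏ i, (sgn1 (z i) (y i) * sgn1 (z i) (y' i)) := by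
    intro z; rw [sgn, sgn, Finset.prod_mul_distrib]
  calc ∑ z : Fin n → Bool, sgn z y * sgn z y'
      = ∑ z : Fin n → Bool, ∏ i, (sgn1 (z i) (y i) * sgn1 (z i) (y' i)) := by
        exact Finset.sum_congr rfl fun z _ => h1 z
    _ = ∏ i, ∑ b : Bool, (sgn1 b (y i) * sgn1 b (y' i)) :=
        (Fintype.prod_sum (κ := fun _ : Fin n => Bool)
          (fun i b => sgn1 b (y i) * sgn1 b (y' i))).symm
    _ = ∏ i, (if y i = y' i then (2:ℂ) else 0) := by
        refine Finset.prod_congr rfl fun i _ => ?_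
        cases hy : y i <;> cases hy' : y' i <;> simp [sgn1] <;> norm_num
    _ = if y = y' then (2 : ℂ) ^ n else 0 := by
        by_cases h : y = y'
        · subst h; simp
        · obtain ⟨i, hi⟩ := Function.ne_iff.mp h
          rw [Finset.prod_eq_zero (Finset.mem_univ i) (by simp [hi]), if_neg h]

lemma ghz_cons (p : ℕ) (a : Fin p → Bool) (b c : Bool) (r : Fin p → Bool) :
    ghzAmp p a b (Fin.cons c r) =
      (Real.sqrt 2 : ℂ)⁻¹ * (sgn1 c b *
        (if a = fun j => xor (r j) c then 1 else 0)) := by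
  cases c
  · have : (fun j => xor (r j) false) = r := by funext j; simp
    rw [this]
    simp [ghzAmp, sgn1, Fin.cons_inj, eq_comm]
  · have h2 : (r = fun j => !a j) ↔ (a = fun j => xor (r j) true) := by
      constructor <;> intro h <;> funext j <;>
        · have := congrFun h j
          revert this
          cases hr : r j <;> cases ha : a j <;> simp
    simp only [ghzAmp, sgn1, Fin.cons_inj]
    simp [h2]


section main

variable {n p : ℕ} {E : Type*} [Fintype E] [DecidableEq E]

lemma prod_delta {ι : Type*} [Fintype ι] {β : ι → Type*} (f g : ∀ i, β i)
    [DecidableEq (∀ i, β i)] [∀ i, DecidableEq (β i)] :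
    (∏ i, if f i = g i then (1:ℂ) else 0) = if f = g then 1 else 0 := by
  by_cases h : f = g
  · subst h; simp
  · obtain ⟨i, hi⟩ := Function.ne_iff.mp h
    rw [Finset.prod_eq_zero (Finset.mem_univ i) (by simp [hi]), if_neg h]

variable (J : Finset (Fin n → Bool))
    (Evec : (Fin n → Fin p → Bool) → (Fin n → Bool) → E → ℂ)
    (ψ : ((Fin n → Fin (p + 1) → Bool) × E) → ℂ)

lemma psi_cons
    (hψ : ∀ s e, ψ (s, e) = ∑ x : Fin n → Fin p → Bool, ∑ y ∈ J,
        (∏ i, ghzAmp p (x i) (y i) (s i)) * Evec x y e)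
    (z : Fin n → Bool) (r : Fin n → Fin p → Bool) (e : E) :
    ψ (fun i => Fin.cons (z i) (r i), e) =
      ((Real.sqrt 2 : ℂ))⁻¹ ^ n * ∑ y ∈ J, sgn z y * Evec (flipx z r) y e := by
  rw [hψ, Finset.sum_comm, Finset.mul_sum]
  refine Finset.sum_congr rfl fun y _ => ?_
  have key : ∀ x : Fin n → Fin p → Bool,
      (∏ i, ghzAmp p (x i) (y i) (Fin.cons (z i) (r i)))
        = ((Real.sqrt 2 : ℂ))⁻¹ ^ n * sgn z y * (if x = flipx z r then 1 else 0) := by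
    intro x
    have h1 : ∀ i, ghzAmp p (x i) (y i) (Fin.cons (z i) (r i))
        = (Real.sqrt 2 : ℂ)⁻¹ * (sgn1 (z i) (y i) * (if x i = flipx z r i then 1 else 0)) :=
      fun i => ghz_cons p (x i) (y i) (z i) (r i)
    rw [Finset.prod_congr rfl (fun i _ => h1 i), Finset.prod_mul_distrib,
      Finset.prod_mul_distrib, Finset.prod_const, Finset.card_univ, Fintype.card_fin,
      prod_delta]
    rw [sgn, mul_assoc]
  calc ∑ x : Fin n → Fin p → Bool, (∏ i, ghzAmp p (x i) (y i) (Fin.cons (z i) (r i))) * Evec x y e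
      = ∑ x : Fin n → Fin p → Bool, (if x = flipx z r then
          ((Real.sqrt 2 : ℂ))⁻¹ ^ n * sgn z y * Evec x y e else 0) := by
        refine Finset.sum_congr rfl fun x _ => ?_
        rw [key x]
        by_cases hx : x = flipx z r <;> simp [hx]
    _ = ((Real.sqrt 2 : ℂ))⁻¹ ^ n * (sgn z y * Evec (flipx z r) y e) := by
        rw [Finset.sum_ite_eq']
        simp [mul_assoc]

def consEquiv (n p : ℕ) : ((Fin n → Bool) × (Fin n → Fin p → Bool)) ≃ (Fin n → Fin (p+1) → Bool) where
  toFun zr := fun i => Fin.cons (zr.1 i) (zr.2 i)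
  invFun s := (fun i => s i 0, fun i j => s i j.succ)
  left_inv zr := by
    refine Prod.ext ?_ ?_ <;> funext i <;> simp
  right_inv s := funext fun i => Fin.cons_self_tail (s i)

lemma sum_over_cons {α : Type*} [AddCommMonoid α] (F : (Fin n → Fin (p+1) → Bool) → α) :
    ∑ s, F s = ∑ z : Fin n → Bool, ∑ r : Fin n → Fin p → Bool,
      F (fun i => Fin.cons (z i) (r i)) := by
  rw [← Equiv.sum_comp (consEquiv n p) F, Fintype.sum_prod_type]
  rfl

lemma sum_flipx {α : Type*} [AddCommMonoid α] (z : Fin n → Bool)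
    (G : (Fin n → Fin p → Bool) → α) :
    ∑ r, G (flipx z r) = ∑ r, G r :=
  Equiv.sum_comp (Function.Involutive.toPerm (flipx z) (flipx_flipx z)) G


lemma sum_sum_comm {α β γ δ : Type*} {M : Type*} [AddCommMonoid M]
    (s : Finset α) (t : Finset β) (u : Finset γ) (v : Finset δ)
    (f : α → β → γ → δ → M) :
    ∑ a ∈ s, ∑ b ∈ t, ∑ c ∈ u, ∑ d ∈ v, f a b c d
      = ∑ c ∈ u, ∑ d ∈ v, ∑ a ∈ s, ∑ b ∈ t, f a b c d := by
  calc ∑ a ∈ s, ∑ b ∈ t, ∑ c ∈ u, ∑ d ∈ v, f a b c d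
      = ∑ a ∈ s, ∑ c ∈ u, ∑ b ∈ t, ∑ d ∈ v, f a b c d :=
        Finset.sum_congr rfl fun a _ => Finset.sum_comm
    _ = ∑ c ∈ u, ∑ a ∈ s, ∑ b ∈ t, ∑ d ∈ v, f a b c d := Finset.sum_comm
    _ = ∑ c ∈ u, ∑ a ∈ s, ∑ d ∈ v, ∑ b ∈ t, f a b c d :=
        Finset.sum_congr rfl fun c _ => Finset.sum_congr rfl fun a _ => Finset.sum_comm
    _ = ∑ c ∈ u, ∑ d ∈ v, ∑ a ∈ s, ∑ b ∈ t, f a b c d :=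
        Finset.sum_congr rfl fun c _ => Finset.sum_comm

noncomputable def sigmaM : Matrix E E ℂ :=
  Matrix.of fun e e' => ∑ x : Fin n → Fin p → Bool, ∑ y ∈ J,
    Evec x y e * (starRingEnd ℂ) (Evec x y e')

noncomputable def amp (w : E → ℂ) (x : Fin n → Fin p → Bool) (y : Fin n → Bool) : ℂ :=
  ∑ e, (starRingEnd ℂ) (w e) * Evec x y e

lemma Qsigma (w : E → ℂ) :
    ∑ e, (starRingEnd ℂ) (w e) * (∑ e', sigmaM J Evec e e' * w e')
      = ((∑ x : Fin n → Fin p → Bool, ∑ y ∈ J,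
          Complex.normSq (amp Evec w x y) : ℝ) : ℂ) := by
  have hL : ∑ e, (starRingEnd ℂ) (w e) * (∑ e', sigmaM J Evec e e' * w e')
      = ∑ e : E, ∑ e' : E, ∑ x : Fin n → Fin p → Bool, ∑ y ∈ J,
          ((starRingEnd ℂ) (w e) * Evec x y e) * (w e' * (starRingEnd ℂ) (Evec x y e')) := by
    refine Finset.sum_congr rfl fun e _ => ?_
    rw [Finset.mul_sum]
    refine Finset.sum_congr rfl fun e' _ => ?_
    simp only [sigmaM, Matrix.of_apply, Finset.sum_mul, Finset.mul_sum]
    exact Finset.sum_congr rfl fun x _ => Finset.sum_congr rfl fun y _ => by ring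
  rw [hL, sum_sum_comm]
  push_cast
  refine Finset.sum_congr rfl fun x _ => Finset.sum_congr rfl fun y _ => ?_
  rw [show ((Complex.normSq (amp Evec w x y) : ℝ) : ℂ)
      = amp Evec w x y * (starRingEnd ℂ) (amp Evec w x y) from (Complex.mul_conj _).symm]
  rw [amp, map_sum, Finset.sum_mul_sum]
  exact Finset.sum_congr rfl fun e _ => Finset.sum_congr rfl fun e' _ => by
    simp only [map_mul, Complex.conj_conj]; try ring

lemma sqrt2_inv_mul : ((Real.sqrt 2 : ℂ))⁻¹ * ((Real.sqrt 2 : ℂ))⁻¹ = ((2 : ℂ))⁻¹ := by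
  rw [← mul_inv, ← Complex.ofReal_mul, Real.mul_self_sqrt (by norm_num)]
  norm_num

lemma hcc : ((Real.sqrt 2 : ℂ))⁻¹ ^ n * ((Real.sqrt 2 : ℂ))⁻¹ ^ n = ((2 : ℂ))⁻¹ ^ n := by
  rw [← mul_pow, sqrt2_inv_mul]

lemma normSq_cpow : Complex.normSq ((Real.sqrt 2 : ℂ)⁻¹ ^ n) = ((2:ℝ))⁻¹ ^ n := by
  rw [map_pow, map_inv₀, Complex.normSq_ofReal, Real.mul_self_sqrt (by norm_num)]

lemma amp_psi (hψ : ∀ s e, ψ (s, e) = ∑ x : Fin n → Fin p → Bool, ∑ y ∈ J,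
      (∏ i, ghzAmp p (x i) (y i) (s i)) * Evec x y e)
    (z : Fin n → Bool) (r : Fin n → Fin p → Bool) (w : E → ℂ) :
    (∑ e, (starRingEnd ℂ) (w e) * ψ (fun i => Fin.cons (z i) (r i), e))
      = (Real.sqrt 2 : ℂ)⁻¹ ^ n * ∑ y ∈ J, sgn z y * amp Evec w (flipx z r) y := by
  rw [Finset.sum_congr rfl (fun e _ => by rw [psi_cons J Evec ψ hψ z r e])]
  simp only [Finset.mul_sum, amp]
  rw [Finset.sum_comm]
  exact Finset.sum_congr rfl fun y _ => Finset.sum_congr rfl fun e _ => by ring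

lemma Qblk (hψ : ∀ s e, ψ (s, e) = ∑ x : Fin n → Fin p → Bool, ∑ y ∈ J,
      (∏ i, ghzAmp p (x i) (y i) (s i)) * Evec x y e)
    (z : Fin n → Bool) (w : E → ℂ) :
    ∑ e, (starRingEnd ℂ) (w e) * (∑ e', (∑ r : Fin n → Fin p → Bool,
        ψ (fun i => Fin.cons (z i) (r i), e) *
          (starRingEnd ℂ) (ψ (fun i => Fin.cons (z i) (r i), e'))) * w e')
      = ((∑ r : Fin n → Fin p → Bool, ((2:ℝ))⁻¹ ^ n *
          Complex.normSq (∑ y ∈ J, sgn z y * amp Evec w (flipx z r) y) : ℝ) : ℂ) := by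
  have hL : ∑ e, (starRingEnd ℂ) (w e) * (∑ e', (∑ r : Fin n → Fin p → Bool,
        ψ (fun i => Fin.cons (z i) (r i), e) *
          (starRingEnd ℂ) (ψ (fun i => Fin.cons (z i) (r i), e'))) * w e')
      = ∑ r : Fin n → Fin p → Bool,
          (∑ e, (starRingEnd ℂ) (w e) * ψ (fun i => Fin.cons (z i) (r i), e)) *
          (starRingEnd ℂ) (∑ e, (starRingEnd ℂ) (w e) * ψ (fun i => Fin.cons (z i) (r i), e)) := by
    have h1 : ∑ e, (starRingEnd ℂ) (w e) * (∑ e', (∑ r : Fin n → Fin p → Bool,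
        ψ (fun i => Fin.cons (z i) (r i), e) *
          (starRingEnd ℂ) (ψ (fun i => Fin.cons (z i) (r i), e'))) * w e')
        = ∑ e : E, ∑ e' : E, ∑ r : Fin n → Fin p → Bool,
            ((starRingEnd ℂ) (w e) * ψ (fun i => Fin.cons (z i) (r i), e)) *
            ((starRingEnd ℂ) (ψ (fun i => Fin.cons (z i) (r i), e')) * w e') := by
      refine Finset.sum_congr rfl fun e _ => ?_
      rw [Finset.mul_sum]
      refine Finset.sum_congr rfl fun e' _ => ?_
      simp only [Finset.sum_mul, Finset.mul_sum]
      exact Finset.sum_congr rfl fun r _ => by ring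
    rw [h1]
    rw [show (∑ e : E, ∑ e' : E, ∑ r : Fin n → Fin p → Bool,
            ((starRingEnd ℂ) (w e) * ψ (fun i => Fin.cons (z i) (r i), e)) *
            ((starRingEnd ℂ) (ψ (fun i => Fin.cons (z i) (r i), e')) * w e'))
        = ∑ r : Fin n → Fin p → Bool, ∑ e : E, ∑ e' : E,
            ((starRingEnd ℂ) (w e) * ψ (fun i => Fin.cons (z i) (r i), e)) *
            ((starRingEnd ℂ) (ψ (fun i => Fin.cons (z i) (r i), e')) * w e') from by
      calc (∑ e : E, ∑ e' : E, ∑ r : Fin n → Fin p → Bool, _)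
          = ∑ e : E, ∑ r : Fin n → Fin p → Bool, ∑ e' : E, _ :=
            Finset.sum_congr rfl fun e _ => Finset.sum_comm
        _ = ∑ r : Fin n → Fin p → Bool, ∑ e : E, ∑ e' : E, _ := Finset.sum_comm]
    refine Finset.sum_congr rfl fun r _ => ?_
    rw [map_sum, Finset.sum_mul_sum]
    refine Finset.sum_congr rfl fun e _ => Finset.sum_congr rfl fun e' _ => ?_
    simp only [map_mul, Complex.conj_conj]
    ring
  rw [hL]
  push_cast
  refine Finset.sum_congr rfl fun r _ => ?_
  rw [amp_psi J Evec ψ hψ z r w, Complex.mul_conj]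
  rw [map_mul, normSq_cpow]
  push_cast
  ring

lemma cs_step (z : Fin n → Bool) (a : (Fin n → Fin p → Bool) → (Fin n → Bool) → ℂ) :
    ∑ r : Fin n → Fin p → Bool, ((2:ℝ))⁻¹ ^ n *
        Complex.normSq (∑ y ∈ J, sgn z y * a (flipx z r) y)
      ≤ ((J.card : ℝ) * (((2:ℝ)) ^ n)⁻¹) *
          ∑ x : Fin n → Fin p → Bool, ∑ y ∈ J, Complex.normSq (a x y) := by
  rw [sum_flipx z (fun x => ((2:ℝ))⁻¹ ^ n * Complex.normSq (∑ y ∈ J, sgn z y * a x y))]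
  rw [Finset.mul_sum]
  refine Finset.sum_le_sum fun x _ => ?_
  have h1 : Complex.normSq (∑ y ∈ J, sgn z y * a x y)
      ≤ (J.card : ℝ) * ∑ y ∈ J, Complex.normSq (a x y) := by
    have habs : ‖∑ y ∈ J, sgn z y * a x y‖ ≤ ∑ y ∈ J, ‖a x y‖ := by
      refine le_trans (norm_sum_le _ _) (le_of_eq ?_)
      exact Finset.sum_congr rfl fun y _ => by rw [norm_mul, abs_sgn, one_mul]
    calc Complex.normSq (∑ y ∈ J, sgn z y * a x y)
        = ‖∑ y ∈ J, sgn z y * a x y‖ ^ 2 := (Complex.sq_norm _).symm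
      _ ≤ (∑ y ∈ J, ‖a x y‖) ^ 2 := by
          exact pow_le_pow_left₀ (norm_nonneg _) habs 2
      _ ≤ (J.card : ℝ) * ∑ y ∈ J, ‖a x y‖ ^ 2 := sq_sum_le_card_mul_sum_sq
      _ = (J.card : ℝ) * ∑ y ∈ J, Complex.normSq (a x y) := by
          rw [Finset.mul_sum, Finset.mul_sum]
          exact Finset.sum_congr rfl fun y _ => by rw [Complex.sq_norm]
  calc ((2:ℝ))⁻¹ ^ n * Complex.normSq (∑ y ∈ J, sgn z y * a x y)
      ≤ ((2:ℝ))⁻¹ ^ n * ((J.card : ℝ) * ∑ y ∈ J, Complex.normSq (a x y)) := by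
        exact mul_le_mul_of_nonneg_left h1 (by positivity)
    _ = (J.card : ℝ) * (((2:ℝ)) ^ n)⁻¹ * ∑ y ∈ J, Complex.normSq (a x y) := by
        rw [inv_pow]; ring


lemma hnormC
    (hψ : ∀ s e, ψ (s, e) = ∑ x : Fin n → Fin p → Bool, ∑ y ∈ J,
      (∏ i, ghzAmp p (x i) (y i) (s i)) * Evec x y e)
    (hnorm : ∑ s : Fin n → Fin (p + 1) → Bool, ∑ e : E, ‖ψ (s, e)‖ ^ 2 = 1) :
    ∑ z : Fin n → Bool, ∑ r : Fin n → Fin p → Bool, ∑ e,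
      ψ (fun i => Fin.cons (z i) (r i), e) *
        (starRingEnd ℂ) (ψ (fun i => Fin.cons (z i) (r i), e)) = 1 := by
  rw [← sum_over_cons (fun s => ∑ e, ψ (s, e) * (starRingEnd ℂ) (ψ (s, e)))]
  have h2 : ∀ s e, ψ (s,e) * (starRingEnd ℂ) (ψ (s,e)) = ((‖ψ (s,e)‖^2 : ℝ) : ℂ) := fun s e => by
    rw [Complex.mul_conj, Complex.normSq_eq_norm_sq]
  calc ∑ s : Fin n → Fin (p + 1) → Bool, ∑ e, ψ (s,e) * (starRingEnd ℂ) (ψ (s,e))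
      = ∑ s : Fin n → Fin (p + 1) → Bool, ∑ e, ((‖ψ (s,e)‖^2 : ℝ) : ℂ) :=
        Finset.sum_congr rfl fun s _ => Finset.sum_congr rfl fun e _ => h2 s e
    _ = ((∑ s : Fin n → Fin (p + 1) → Bool, ∑ e, ‖ψ (s,e)‖^2 : ℝ) : ℂ) := by push_cast; rfl
    _ = 1 := by rw [hnorm]; norm_num

lemma normid
    (hψ : ∀ s e, ψ (s, e) = ∑ x : Fin n → Fin p → Bool, ∑ y ∈ J,
      (∏ i, ghzAmp p (x i) (y i) (s i)) * Evec x y e)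
    (hnorm : ∑ s : Fin n → Fin (p + 1) → Bool, ∑ e : E, ‖ψ (s, e)‖ ^ 2 = 1) :
    ∑ y ∈ J, ∑ x : Fin n → Fin p → Bool, ∑ e,
      Evec x y e * (starRingEnd ℂ) (Evec x y e) = 1 := by
  have hA : ∀ z : Fin n → Bool,
      (∑ r : Fin n → Fin p → Bool, ∑ e, ψ (fun i => Fin.cons (z i) (r i), e) *
          (starRingEnd ℂ) (ψ (fun i => Fin.cons (z i) (r i), e)))
      = ((2:ℂ))⁻¹ ^ n * ∑ y ∈ J, ∑ y' ∈ J, sgn z y * sgn z y' * (∑ x : Fin n → Fin p → Bool, ∑ e, Evec x y e * (starRingEnd ℂ) (Evec x y' e)) := by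
    intro z
    have h1 : ∀ (r : Fin n → Fin p → Bool) e,
        ψ (fun i => Fin.cons (z i) (r i), e) *
          (starRingEnd ℂ) (ψ (fun i => Fin.cons (z i) (r i), e))
        = ∑ y ∈ J, ∑ y' ∈ J, ((2:ℂ))⁻¹ ^ n * (sgn z y * sgn z y' *
            (Evec (flipx z r) y e * (starRingEnd ℂ) (Evec (flipx z r) y' e))) := by
      intro r e
      rw [psi_cons J Evec ψ hψ z r e, map_mul, map_sum, map_pow, map_inv₀,
        Complex.conj_ofReal, mul_mul_mul_comm, hcc, Finset.sum_mul_sum, Finset.mul_sum]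
      refine Finset.sum_congr rfl fun y _ => ?_
      rw [Finset.mul_sum]
      refine Finset.sum_congr rfl fun y' _ => ?_
      simp only [map_mul, conj_sgn]
      ring
    rw [Finset.sum_congr rfl fun r (_ : r ∈ Finset.univ) =>
      Finset.sum_congr rfl fun e (_ : e ∈ Finset.univ) => h1 r e]
    rw [sum_sum_comm, Finset.mul_sum]
    refine Finset.sum_congr rfl fun y _ => ?_
    rw [Finset.mul_sum]
    refine Finset.sum_congr rfl fun y' _ => ?_
    rw [show (∑ x : Fin n → Fin p → Bool, ∑ e, Evec x y e * (starRingEnd ℂ) (Evec x y' e))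
        = ∑ r : Fin n → Fin p → Bool, ∑ e,
            Evec (flipx z r) y e * (starRingEnd ℂ) (Evec (flipx z r) y' e) from
      (sum_flipx z (fun x => ∑ e, Evec x y e * (starRingEnd ℂ) (Evec x y' e))).symm]
    simp only [Finset.mul_sum]
    try exact Finset.sum_congr rfl fun r _ => Finset.sum_congr rfl fun e _ => by ring
  have htot := hnormC J Evec ψ hψ hnorm
  rw [Finset.sum_congr rfl fun z (_ : z ∈ Finset.univ) => hA z] at htot
  rw [← Finset.mul_sum] at htot
  have hswap : (∑ z : Fin n → Bool, ∑ y ∈ J, ∑ y' ∈ J, sgn z y * sgn z y' * (∑ x : Fin n → Fin p → Bool, ∑ e, Evec x y e * (starRingEnd ℂ) (Evec x y' e)))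
      = ∑ y ∈ J, ∑ y' ∈ J, (∑ z : Fin n → Bool, sgn z y * sgn z y') * (∑ x : Fin n → Fin p → Bool, ∑ e, Evec x y e * (starRingEnd ℂ) (Evec x y' e)) := by
    rw [Finset.sum_comm]
    refine Finset.sum_congr rfl fun y _ => ?_
    rw [Finset.sum_comm]
    refine Finset.sum_congr rfl fun y' _ => ?_
    rw [Finset.sum_mul]
  rw [hswap] at htot
  have hdiag : (∑ y ∈ J, ∑ y' ∈ J, (∑ z : Fin n → Bool, sgn z y * sgn z y') * (∑ x : Fin n → Fin p → Bool, ∑ e, Evec x y e * (starRingEnd ℂ) (Evec x y' e)))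
      = ∑ y ∈ J, (2:ℂ)^n * (∑ x : Fin n → Fin p → Bool, ∑ e, Evec x y e * (starRingEnd ℂ) (Evec x y e)) := by
    refine Finset.sum_congr rfl fun y hy => ?_
    rw [Finset.sum_congr rfl fun y' (_ : y' ∈ J) => by rw [sum_sgn_mul]]
    simp only [ite_mul, zero_mul]
    rw [Finset.sum_ite_eq, if_pos hy]
  rw [hdiag, Finset.mul_sum] at htot
  calc ∑ y ∈ J, (∑ x : Fin n → Fin p → Bool, ∑ e, Evec x y e * (starRingEnd ℂ) (Evec x y e))
      = ∑ y ∈ J, (2:ℂ)⁻¹ ^ n * ((2:ℂ)^n *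
          (∑ x : Fin n → Fin p → Bool, ∑ e, Evec x y e * (starRingEnd ℂ) (Evec x y e))) := by
        refine Finset.sum_congr rfl fun y _ => ?_
        rw [← mul_assoc, inv_pow, inv_mul_cancel₀ (pow_ne_zero n two_ne_zero), one_mul]
    _ = 1 := htot

lemma sigmaM_posSemidef : (sigmaM J Evec).PosSemidef := by
  rw [Matrix.posSemidef_iff_dotProduct_mulVec]
  constructor
  · ext e e'
    simp only [Matrix.conjTranspose_apply, sigmaM, Matrix.of_apply, map_sum, map_mul,
      Complex.conj_conj, RCLike.star_def]
    exact Finset.sum_congr rfl fun x _ => Finset.sum_congr rfl fun y _ => by ring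
  · intro w
    have h : dotProduct (star w) (Matrix.mulVec (sigmaM J Evec) w)
        = ∑ e, (starRingEnd ℂ) (w e) * (∑ e', sigmaM J Evec e e' * w e') := by
      simp [dotProduct, Matrix.mulVec, RCLike.star_def]
    rw [h, Qsigma]
    exact Complex.zero_le_real.mpr (Finset.sum_nonneg fun x _ =>
      Finset.sum_nonneg fun y _ => Complex.normSq_nonneg _)

lemma sigmaM_trace
    (hψ : ∀ s e, ψ (s, e) = ∑ x : Fin n → Fin p → Bool, ∑ y ∈ J,
      (∏ i, ghzAmp p (x i) (y i) (s i)) * Evec x y e)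
    (hnorm : ∑ s : Fin n → Fin (p + 1) → Bool, ∑ e : E, ‖ψ (s, e)‖ ^ 2 = 1) :
    (sigmaM J Evec).trace = 1 := by
  have h := normid J Evec ψ hψ hnorm
  rw [Matrix.trace]
  simp only [Matrix.diag, sigmaM, Matrix.of_apply]
  calc ∑ e, ∑ x : Fin n → Fin p → Bool, ∑ y ∈ J, Evec x y e * (starRingEnd ℂ) (Evec x y e)
      = ∑ x : Fin n → Fin p → Bool, ∑ e, ∑ y ∈ J,
          Evec x y e * (starRingEnd ℂ) (Evec x y e) := Finset.sum_comm
    _ = ∑ x : Fin n → Fin p → Bool, ∑ y ∈ J, ∑ e,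
          Evec x y e * (starRingEnd ℂ) (Evec x y e) :=
        Finset.sum_congr rfl fun x _ => Finset.sum_comm
    _ = ∑ y ∈ J, ∑ x : Fin n → Fin p → Bool, ∑ e,
          Evec x y e * (starRingEnd ℂ) (Evec x y e) := Finset.sum_comm
    _ = 1 := h

end main
end Stmt10

open Stmt10

/-- Lemma 4 of the paper.  Let `|ψ⟩ = Σ_{x∈B_p^n} Σ_{y∈J} |g^{p+1}(x;y)⟩|E_{x,y}⟩` be
normalized (the `|E_{x,y}⟩` subnormalized).  Measuring the first qubit of each of the
`n` GHZ registers in the `Z` basis and discarding the remaining qubits yields a cq-state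
`ρ_{ZE}` with `H_∞(Z|E)_ρ ≥ n − log₂|J|`. -/
theorem stmt_10 (n p : ℕ) {E : Type*} [Fintype E] [DecidableEq E]
    (J : Finset (Fin n → Bool)) (hJ : J.Nonempty)
    (Evec : (Fin n → Fin p → Bool) → (Fin n → Bool) → E → ℂ)
    (ψ : ((Fin n → Fin (p + 1) → Bool) × E) → ℂ)
    (hψ : ∀ s e, ψ (s, e) =
      ∑ x : Fin n → Fin p → Bool, ∑ y ∈ J,
        (∏ i, ghzAmp p (x i) (y i) (s i)) * Evec x y e)
    (hnorm : ∑ s : Fin n → Fin (p + 1) → Bool, ∑ e : E, ‖ψ (s, e)‖ ^ 2 = 1) :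
    condMinEntropy (A := Fin n → Bool) (E := E)
        (fun u v => if u.1 = v.1 then
          ∑ rest : Fin n → Fin p → Bool,
            ψ (fun i => Fin.cons (u.1 i) (rest i), u.2) *
              (starRingEnd ℂ) (ψ (fun i => Fin.cons (v.1 i) (rest i), v.2))
          else 0) ≥ (n : ℝ) - Real.logb 2 J.card := by
  classical
  rcases isEmpty_or_nonempty E with hE | hE
  · exfalso
    simp only [Finset.univ_eq_empty, Finset.sum_empty, Finset.sum_const, smul_zero] at hnorm
    exact one_ne_zero hnorm.symm
  set ρ : Matrix ((Fin n → Bool) × E) ((Fin n → Bool) × E) ℂ :=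
    (fun u v => if u.1 = v.1 then
          ∑ rest : Fin n → Fin p → Bool,
            ψ (fun i => Fin.cons (u.1 i) (rest i), u.2) *
              (starRingEnd ℂ) (ψ (fun i => Fin.cons (v.1 i) (rest i), v.2))
          else 0) with hρdef
  have hJpos : (0:ℝ) < (J.card : ℝ) := by exact_mod_cast hJ.card_pos
  have hc0 : (2:ℝ) ^ (-((n:ℝ) - Real.logb 2 (J.card : ℝ))) = (J.card:ℝ) * ((2:ℝ)^n)⁻¹ := by
    rw [neg_sub, Real.rpow_sub (by norm_num),
      Real.rpow_logb (by norm_num) (by norm_num) hJpos, Real.rpow_natCast, div_eq_mul_inv]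
  have hρtrace : ρ.trace = 1 := by
    rw [Matrix.trace]
    have h1 : ∀ u : (Fin n → Bool) × E, Matrix.diag ρ u
        = ∑ r : Fin n → Fin p → Bool,
            ψ (fun i => Fin.cons (u.1 i) (r i), u.2) *
              (starRingEnd ℂ) (ψ (fun i => Fin.cons (u.1 i) (r i), u.2)) := by
      intro u; simp [Matrix.diag, hρdef]
    rw [Finset.sum_congr rfl fun u (_ : u ∈ Finset.univ) => h1 u, Fintype.sum_prod_type]
    rw [Finset.sum_congr rfl fun z (_ : z ∈ Finset.univ) =>
      (Finset.sum_comm (γ := E) (α := Fin n → Fin p → Bool))]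
    exact hnormC J Evec ψ hψ hnorm
  unfold condMinEntropy
  rw [ge_iff_le]
  refine le_csSup ?_ ?_
  · -- bounded above by n
    refine ⟨(n:ℝ), fun lam hlam => ?_⟩
    obtain ⟨σ', hPSD', htr', hD⟩ := hlam
    set D : Matrix ((Fin n → Bool) × E) ((Fin n → Bool) × E) ℂ :=
      ((2:ℝ)^(-lam)) • ((1 : Matrix (Fin n → Bool) (Fin n → Bool) ℂ) ⊗ₖ σ') - ρ with hDdef
    have hdiagpos : ∀ u, 0 ≤ D u u := by
      intro u
      have h2 := (Matrix.posSemidef_iff_dotProduct_mulVec.mp hD).2 (Pi.single u 1)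
      rw [Matrix.mulVec_single] at h2
      simpa [dotProduct, Pi.single_apply, Finset.sum_ite_eq, hDdef] using h2
    have htrace : 0 ≤ D.trace := by
      rw [Matrix.trace]
      exact Finset.sum_nonneg fun u _ => hdiagpos u
    rw [hDdef, Matrix.trace_sub, Matrix.trace_smul, Matrix.trace_kronecker, Matrix.trace_one,
      htr', hρtrace, mul_one] at htrace
    have hcard : (Fintype.card (Fin n → Bool) : ℂ) = ((2^n : ℝ) : ℂ) := by
      rw [Fintype.card_fun]; push_cast; norm_num
    rw [hcard, Complex.real_smul, ← Complex.ofReal_mul] at htrace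
    have hreal : (1:ℝ) ≤ (2:ℝ)^(-lam) * 2^n := by
      have := (Complex.le_def.mp htrace).1
      simp only [Complex.sub_re, Complex.ofReal_re, Complex.one_re, Complex.zero_re] at this
      linarith
    have h2n : (0:ℝ) < 2^n := by positivity
    have hge : (2:ℝ)^(-(n:ℝ)) ≤ (2:ℝ)^(-lam) := by
      rw [Real.rpow_neg (by norm_num), Real.rpow_natCast]
      have : (1:ℝ)/2^n ≤ (2:ℝ)^(-lam) := (div_le_iff₀ h2n).mpr (by linarith)
      simpa [one_div] using this
    have := (Real.rpow_le_rpow_left_iff (by norm_num : (1:ℝ) < 2)).mp hge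
    linarith
  · -- membership
    refine ⟨sigmaM J Evec, sigmaM_posSemidef J Evec, sigmaM_trace J Evec ψ hψ hnorm, ?_⟩
    rw [hc0]
    set c0 : ℝ := (J.card:ℝ) * ((2:ℝ)^n)⁻¹ with hc0def
    rw [Matrix.posSemidef_iff_dotProduct_mulVec]
    constructor
    · -- Hermitian
      have hσH := (sigmaM_posSemidef J Evec).1
      ext ⟨z,e⟩ ⟨z',e'⟩
      simp only [Matrix.conjTranspose_apply, Matrix.sub_apply, Matrix.smul_apply,
        Matrix.kroneckerMap_apply, Matrix.one_apply]
      simp only [hρdef]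
      by_cases h : z = z'
      · subst h
        simp only [if_pos rfl, if_true, eq_self_iff_true, one_mul]
        rw [star_sub, star_smul, star_trivial]
        congr 1
        · congr 1
          have := congrFun (congrFun hσH e) e'
          rw [Matrix.conjTranspose_apply] at this
          exact this
        · rw [star_sum]
          refine Finset.sum_congr rfl fun r _ => ?_
          rw [star_mul']
          simp only [RCLike.star_def, Complex.conj_conj]
          ring
      · have h' : ¬ z' = z := fun hh => h hh.symm
        simp [h, h']
    · -- quadratic form
      intro v
      have hz : ∀ z : Fin n → Bool,
          (∑ e, (starRingEnd ℂ) (v (z,e)) * (∑ e',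
            ((c0:ℂ) * sigmaM J Evec e e' - (∑ r : Fin n → Fin p → Bool,
                ψ (fun i => Fin.cons (z i) (r i), e) *
                  (starRingEnd ℂ) (ψ (fun i => Fin.cons (z i) (r i), e')))) * v (z,e')))
          = (((c0 * (∑ x : Fin n → Fin p → Bool, ∑ y ∈ J,
                Complex.normSq (amp Evec (fun e => v (z,e)) x y))
              - (∑ r : Fin n → Fin p → Bool, ((2:ℝ))⁻¹ ^ n *
                Complex.normSq (∑ y ∈ J, sgn z y *
                  amp Evec (fun e => v (z,e)) (flipx z r) y)) : ℝ)) : ℂ) := by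
        intro z
        have hsplit : (∑ e, (starRingEnd ℂ) (v (z,e)) * (∑ e',
            ((c0:ℂ) * sigmaM J Evec e e' - (∑ r : Fin n → Fin p → Bool,
                ψ (fun i => Fin.cons (z i) (r i), e) *
                  (starRingEnd ℂ) (ψ (fun i => Fin.cons (z i) (r i), e')))) * v (z,e')))
            = (c0:ℂ) * (∑ e, (starRingEnd ℂ) (v (z,e)) *
                (∑ e', sigmaM J Evec e e' * v (z,e')))
              - (∑ e, (starRingEnd ℂ) (v (z,e)) * (∑ e',
                  (∑ r : Fin n → Fin p → Bool,
                    ψ (fun i => Fin.cons (z i) (r i), e) *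
                      (starRingEnd ℂ) (ψ (fun i => Fin.cons (z i) (r i), e'))) * v (z,e'))) := by
          simp only [sub_mul, mul_sub, Finset.sum_sub_distrib, Finset.mul_sum]
          congr 1
          refine Finset.sum_congr rfl fun e _ => Finset.sum_congr rfl fun e' _ => by ring
        have hQs := Qsigma J Evec (fun e => v (z,e))
        have hQb := Qblk J Evec ψ hψ z (fun e => v (z,e))
        rw [hsplit, hQs, hQb]
        push_cast
        ring
      have hexp : dotProduct (star v)
          (Matrix.mulVec ((c0 : ℝ) • ((1 : Matrix (Fin n → Bool) (Fin n → Bool) ℂ) ⊗ₖ sigmaM J Evec) - ρ) v)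
          = ∑ z : Fin n → Bool, ∑ e, (starRingEnd ℂ) (v (z,e)) * (∑ e',
            ((c0:ℂ) * sigmaM J Evec e e' - (∑ r : Fin n → Fin p → Bool,
                ψ (fun i => Fin.cons (z i) (r i), e) *
                  (starRingEnd ℂ) (ψ (fun i => Fin.cons (z i) (r i), e')))) * v (z,e')) := by
        simp only [dotProduct, Matrix.mulVec, Pi.star_apply, RCLike.star_def]
        rw [Fintype.sum_prod_type]
        refine Finset.sum_congr rfl fun z _ => Finset.sum_congr rfl fun e _ => ?_
        congr 1
        rw [Fintype.sum_prod_type]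
        have h1 : ∀ z' e', ((c0 : ℝ) • ((1 : Matrix (Fin n → Bool) (Fin n → Bool) ℂ) ⊗ₖ sigmaM J Evec) - ρ) (z,e) (z',e') * v (z',e')
            = (if z = z' then
                ((c0:ℂ) * sigmaM J Evec e e' - (∑ r : Fin n → Fin p → Bool,
                  ψ (fun i => Fin.cons (z i) (r i), e) *
                    (starRingEnd ℂ) (ψ (fun i => Fin.cons (z' i) (r i), e')))) * v (z',e')
              else 0) := by
          intro z' e'
          simp only [Matrix.sub_apply, Matrix.smul_apply, Matrix.kroneckerMap_apply,
            Matrix.one_apply]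
          simp only [hρdef]
          by_cases h : z = z'
          · simp only [if_pos h, one_mul, Complex.real_smul]
          · simp [h]
        rw [Finset.sum_congr rfl fun z' (_ : z' ∈ Finset.univ) =>
          Finset.sum_congr rfl fun e' (_ : e' ∈ Finset.univ) => h1 z' e']
        have h2 : ∀ z' : Fin n → Bool, (∑ e', if z = z' then
                ((c0:ℂ) * sigmaM J Evec e e' - (∑ r : Fin n → Fin p → Bool,
                  ψ (fun i => Fin.cons (z i) (r i), e) *
                    (starRingEnd ℂ) (ψ (fun i => Fin.cons (z' i) (r i), e')))) * v (z',e')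
              else 0)
            = (if z = z' then (∑ e',
                ((c0:ℂ) * sigmaM J Evec e e' - (∑ r : Fin n → Fin p → Bool,
                  ψ (fun i => Fin.cons (z i) (r i), e) *
                    (starRingEnd ℂ) (ψ (fun i => Fin.cons (z' i) (r i), e')))) * v (z',e'))
              else 0) := by
          intro z'
          split <;> simp
        rw [Finset.sum_congr rfl fun z' (_ : z' ∈ Finset.univ) => h2 z']
        simp only [Finset.sum_ite_eq, Finset.mem_univ, if_pos]
      rw [hexp, Finset.sum_congr rfl fun z (_ : z ∈ Finset.univ) => hz z]
      refine Finset.sum_nonneg fun z _ => ?_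
      rw [Complex.zero_le_real, sub_nonneg, hc0def]
      exact cs_step J z (amp Evec (fun e => v (z,e)))
end
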